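/- arXiv:1111.6846 — 9 statements merged into one kernel-verified Lean document; each statement's English description precedes it below -/
import Mathlib

section
/- Assume μ is quasi-invariant under the flip. Let X ⊆ 𝒴 be a measurable subset of the set of atoms. Then the following are equivalent: (1) μ(X) = 0; (2) ν(P₁(X)) = 0, where P₁(X) is the projection of X onto the first coordinate; (3) ν(P₂(X)) = 0, where P₂(X) is the projection of X onto the second coordinate. -/
open MeasureTheory ProbabilityTheory

lemma compProd_null_iff_fst_null
    {Y : Type*} [MeasurableSpace Y] [StandardBorelSpace Y]
    (ν : Measure Y) [IsProbabilityMeasure ν]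
    (κ : Kernel Y Y) [IsMarkovKernel κ]
    (X : Set (Y × Y)) (hX : MeasurableSet X)
    (hXsub : X ⊆ {p : Y × Y | 0 < κ p.1 {p.2}}) :
    (ν ⊗ₘ κ) X = 0 ↔ ν (Prod.fst '' X) = 0 := by
  constructor
  · intro h
    rw [MeasureTheory.Measure.compProd_apply hX,
      lintegral_eq_zero_iff (Kernel.measurable_kernel_prodMk_left hX)] at h
    have h0 : ν {t | κ t (Prod.mk t ⁻¹' X) ≠ 0} = 0 := by
      simpa [ae_iff, Filter.EventuallyEq] using h
    refine measure_mono_null ?_ h0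
    rintro t ⟨⟨t', s⟩, hts, rfl⟩
    have hpos : 0 < κ t' {s} := hXsub hts
    have : κ t' {s} ≤ κ t' (Prod.mk t' ⁻¹' X) :=
      measure_mono (by simpa using hts)
    simp only [Set.mem_setOf_eq]
    exact fun h' => absurd (le_antisymm (h' ▸ this) zero_le) (ne_of_gt hpos)
  · intro h
    rw [MeasureTheory.Measure.compProd_apply hX]
    have hN : ν (toMeasurable ν (Prod.fst '' X)) = 0 := by
      rw [measure_toMeasurable]; exact h
    refine lintegral_eq_zero_iff ?_ |>.2 ?_
    · exact Kernel.measurable_kernel_prodMk_left hX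
    · filter_upwards [measure_eq_zero_iff_ae_notMem.mp hN] with t ht
      have : Prod.mk t ⁻¹' X = ∅ := by
        ext s
        simp only [Set.mem_preimage, Set.mem_empty_iff_false, iff_false]
        intro hs
        exact ht (subset_toMeasurable ν _ ⟨(t, s), hs, rfl⟩)
      simp [this]

/-- Let `κ` be a Markov kernel from `Y` to `Y`, `ν` a Borel probability measure on `Y`,
`μ = ν ⊗ₘ κ`, and assume `μ` is quasi-invariant under the flip `θ(t,s) = (s,t)`.
For any measurable subset `X` of the set of atoms
`𝒴 = {(t,s) | κ t {s} > 0 ∧ κ s {t} > 0}`, the following are equivalent: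
`μ X = 0`; the first projection of `X` is `ν`-null; the second projection of `X` is `ν`-null. -/
theorem compProd_null_iff_projections_null
    {Y : Type*} [MeasurableSpace Y] [StandardBorelSpace Y]
    (ν : Measure Y) [IsProbabilityMeasure ν]
    (κ : Kernel Y Y) [IsMarkovKernel κ]
    (hqi : ν ⊗ₘ κ ≪ (ν ⊗ₘ κ).map Prod.swap ∧ (ν ⊗ₘ κ).map Prod.swap ≪ ν ⊗ₘ κ)
    (X : Set (Y × Y)) (hX : MeasurableSet X)
    (hXsub : X ⊆ {p : Y × Y | 0 < κ p.1 {p.2} ∧ 0 < κ p.2 {p.1}}) :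
    ((ν ⊗ₘ κ) X = 0 ↔ ν (Prod.fst '' X) = 0) ∧
    ((ν ⊗ₘ κ) X = 0 ↔ ν (Prod.snd '' X) = 0) := by
  have h1 : (ν ⊗ₘ κ) X = 0 ↔ ν (Prod.fst '' X) = 0 :=
    compProd_null_iff_fst_null ν κ X hX (fun p hp => (hXsub hp).1)
  refine ⟨h1, ?_⟩
  have hX' : MeasurableSet (Prod.swap ⁻¹' X) := measurable_swap hX
  have hswap : (ν ⊗ₘ κ) X = 0 ↔ (ν ⊗ₘ κ) (Prod.swap ⁻¹' X) = 0 := by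
    constructor
    · intro h
      have : ((ν ⊗ₘ κ).map Prod.swap) X = 0 := hqi.2 h
      rwa [Measure.map_apply measurable_swap hX] at this
    · intro h
      have : ((ν ⊗ₘ κ).map Prod.swap) X = 0 := by
        rwa [Measure.map_apply measurable_swap hX]
      exact hqi.1 this
  have h2 : (ν ⊗ₘ κ) (Prod.swap ⁻¹' X) = 0 ↔ ν (Prod.fst '' (Prod.swap ⁻¹' X)) = 0 :=
    compProd_null_iff_fst_null ν κ _ hX' (fun p hp => (hXsub hp).2)
  have himg : Prod.fst '' (Prod.swap ⁻¹' X) = Prod.snd '' X := by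
    ext t
    constructor
    · rintro ⟨⟨a, b⟩, hab, rfl⟩
      exact ⟨(b, a), hab, rfl⟩
    · rintro ⟨⟨a, b⟩, hab, rfl⟩
      exact ⟨(b, a), hab, rfl⟩
  rw [hswap, h2, himg]
end

section
/- Assume μ is quasi-invariant under the flip. Let h : Y → Y be a measurable map whose graph is weakly contained in 𝒴, i.e., there exists a ν-null set N₁ ⊆ Y such that {(t, h(t)) : t ∈ Y} \ (N₁ × N₁) ⊆ 𝒴. Then for every measurable set E ⊆ Y one has ν(E) = 0 if and only if ν(h(E)) = 0, where h(E) denotes the image of E under h. -/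
open MeasureTheory ProbabilityTheory

/-- Let `κ` be a Markov kernel from `Y` to `Y`, `ν` a Borel probability measure on `Y`,
`μ = ν ⊗ₘ κ`, and assume `μ` is quasi-invariant under the flip. Let `h : Y → Y` be a
measurable map whose graph is weakly contained in the set of atoms
`𝒴 = {(t,s) | κ t {s} > 0 ∧ κ s {t} > 0}`. Then for every measurable `E ⊆ Y`,
`ν E = 0` iff `ν (h '' E) = 0`. -/
theorem null_iff_image_null_of_graph_weakly_contained_in_atoms
    {Y : Type*} [MeasurableSpace Y] [StandardBorelSpace Y]
    (ν : Measure Y) [IsProbabilityMeasure ν]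
    (κ : Kernel Y Y) [IsMarkovKernel κ]
    (hqi : ν ⊗ₘ κ ≪ (ν ⊗ₘ κ).map Prod.swap ∧ (ν ⊗ₘ κ).map Prod.swap ≪ ν ⊗ₘ κ)
    (h : Y → Y) (hmeas : Measurable h)
    (hgraph : ∃ N₁ : Set Y, ν N₁ = 0 ∧
      {p : Y × Y | p.2 = h p.1} \ (N₁ ×ˢ N₁) ⊆
        {p : Y × Y | 0 < κ p.1 {p.2} ∧ 0 < κ p.2 {p.1}}) :
    ∀ E : Set Y, MeasurableSet E → (ν E = 0 ↔ ν (h '' E) = 0) := by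
  obtain ⟨N₁, hN₁, hsub⟩ := hgraph
  have key : ∀ G : Set Y, MeasurableSet G → ν G = 0 → ν {t | κ t G ≠ 0} = 0 := by
    intro G hG hG0
    have h1 : (ν ⊗ₘ κ) (Set.univ ×ˢ G) = 0 := by
      refine hqi.1 ?_
      rw [Measure.map_apply measurable_swap (MeasurableSet.univ.prod hG)]
      have hpre : Prod.swap ⁻¹' (Set.univ ×ˢ G : Set (Y × Y)) = G ×ˢ Set.univ := by
        ext p; simp [Set.mem_prod]
      rw [hpre, Measure.compProd_apply_prod hG MeasurableSet.univ,
        Measure.restrict_eq_zero.mpr hG0, lintegral_zero_measure]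
    rw [Measure.compProd_apply (MeasurableSet.univ.prod hG)] at h1
    have h2 : ∫⁻ t, κ t G ∂ν = 0 := by
      rw [← h1]; congr 1; ext t; congr 1; ext s; simp
    have h3 := (lintegral_eq_zero_iff (κ.measurable_coe hG)).mp h2
    simpa [Filter.EventuallyEq, ae_iff] using h3
  intro E hE
  constructor
  · intro hE0
    have hN₂ := key E hE hE0
    refine measure_mono_null (fun s hs => ?_) (measure_union_null hN₂ hN₁)
    obtain ⟨t, ht, rfl⟩ := hs
    by_cases hcase : t ∈ N₁ ∧ h t ∈ N₁
    · exact Or.inr hcase.2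
    · have hat := hsub (show (t, h t) ∈ _ from ⟨rfl, fun hp => hcase ⟨hp.1, hp.2⟩⟩)
      exact Or.inl
        ((lt_of_lt_of_le hat.2 (measure_mono (Set.singleton_subset_iff.mpr ht))).ne')
  · intro hF0
    have hG0 : ν (toMeasurable ν (h '' E)) = 0 := by
      rw [measure_toMeasurable]; exact hF0
    have hN₃ := key _ (measurableSet_toMeasurable ν _) hG0
    refine measure_mono_null (fun t ht => ?_) (measure_union_null hN₃ hN₁)
    by_cases hcase : t ∈ N₁ ∧ h t ∈ N₁
    · exact Or.inr hcase.1
    · have hat := hsub (show (t, h t) ∈ _ from ⟨rfl, fun hp => hcase ⟨hp.1, hp.2⟩⟩)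
      have hmem : h t ∈ toMeasurable ν (h '' E) :=
        subset_toMeasurable ν _ ⟨t, ht, rfl⟩
      exact Or.inl
        ((lt_of_lt_of_le hat.1 (measure_mono (Set.singleton_subset_iff.mpr hmem))).ne')
end

section
/- Let h : Y → Y be a measurable map whose graph is weakly contained in 𝒴, i.e., there exists a ν-null set N₁ ⊆ Y such that Γ_h \ (N₁ × N₁) ⊆ 𝒴, where Γ_h = {(t, h(t)) : t ∈ Y}. Then μ(Γ_h) > 0. -/
open MeasureTheory ProbabilityTheory

/-- Let `κ` be a Markov kernel from `Y` to `Y`, `ν` a Borel probability measure on `Y`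
and `μ = ν ⊗ₘ κ`. If `h : Y → Y` is a measurable map whose graph is weakly contained in
the set of atoms `𝒴 = {(t,s) | κ t {s} > 0 ∧ κ s {t} > 0}`, then `μ (Γ_h) > 0`. -/
theorem compProd_graph_pos_of_weakly_contained_in_atoms
    {Y : Type*} [MeasurableSpace Y] [StandardBorelSpace Y]
    (ν : Measure Y) [IsProbabilityMeasure ν]
    (κ : Kernel Y Y) [IsMarkovKernel κ]
    (h : Y → Y) (hmeas : Measurable h)
    (hgraph : ∃ N₁ : Set Y, ν N₁ = 0 ∧
      {p : Y × Y | p.2 = h p.1} \ (N₁ ×ˢ N₁) ⊆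
        {p : Y × Y | 0 < κ p.1 {p.2} ∧ 0 < κ p.2 {p.1}}) :
    0 < (ν ⊗ₘ κ) {p : Y × Y | p.2 = h p.1} := by
  obtain ⟨N, hN0, hsub⟩ := hgraph
  have hmg : MeasurableSet {p : Y × Y | p.2 = h p.1} := by
    letI := upgradeStandardBorel Y
    exact MeasureTheory.StronglyMeasurable.measurableSet_eq_fun measurable_snd.stronglyMeasurable
      (hmeas.comp measurable_fst).stronglyMeasurable
  rw [Measure.compProd_apply hmg]
  by_contra hc
  push_neg at hc
  have h0 : ∫⁻ t, κ t (Prod.mk t ⁻¹' {p : Y × Y | p.2 = h p.1}) ∂ν = 0 :=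
    le_antisymm hc zero_le
  have hmf : Measurable fun t => κ t (Prod.mk t ⁻¹' {p : Y × Y | p.2 = h p.1}) :=
    Kernel.measurable_kernel_prodMk_left hmg
  have hze : ∀ᵐ t ∂ν, κ t (Prod.mk t ⁻¹' {p : Y × Y | p.2 = h p.1}) = 0 :=
    (lintegral_eq_zero_iff hmf).mp h0
  have hNae : ∀ᵐ t ∂ν, t ∉ N := by
    rw [ae_iff]; simpa using hN0
  obtain ⟨t, ht0, htN⟩ := (hze.and hNae).exists
  have : (t, h t) ∈ {p : Y × Y | p.2 = h p.1} \ (N ×ˢ N) := by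
    constructor
    · rfl
    · intro hmem
      exact htN hmem.1
  have hpos := (hsub this).1
  have : Prod.mk t ⁻¹' {p : Y × Y | p.2 = h p.1} = {h t} := by
    ext s; simp [eq_comm]
  rw [this] at ht0
  simp only [ht0, lt_self_iff_false] at hpos
end

section
/- Assume μ is quasi-invariant under the flip. If X ⊆ 𝒴 is a measurable subset of the set of atoms with μ(X) = 0, then there exists a ν-null measurable set N₀ ⊆ Y such that X ⊆ N₀ × N₀. -/
open MeasureTheory ProbabilityTheory

/-- Let `κ` be a Markov kernel from `Y` to `Y`, `ν` a Borel probability measure on `Y`,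
`μ = ν ⊗ₘ κ`, and assume `μ` is quasi-invariant under the flip. If `X` is a measurable
subset of the set of atoms `𝒴 = {(t,s) | κ t {s} > 0 ∧ κ s {t} > 0}` with `μ X = 0`,
then there is a measurable `ν`-null set `N₀ ⊆ Y` with `X ⊆ N₀ × N₀`. -/
theorem null_subset_of_atoms_contained_in_null_square
    {Y : Type*} [MeasurableSpace Y] [StandardBorelSpace Y]
    (ν : Measure Y) [IsProbabilityMeasure ν]
    (κ : Kernel Y Y) [IsMarkovKernel κ]
    (hqi : ν ⊗ₘ κ ≪ (ν ⊗ₘ κ).map Prod.swap ∧ (ν ⊗ₘ κ).map Prod.swap ≪ ν ⊗ₘ κ)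
    (X : Set (Y × Y)) (hX : MeasurableSet X)
    (hXsub : X ⊆ {p : Y × Y | 0 < κ p.1 {p.2} ∧ 0 < κ p.2 {p.1}})
    (hXnull : (ν ⊗ₘ κ) X = 0) :
    ∃ N₀ : Set Y, MeasurableSet N₀ ∧ ν N₀ = 0 ∧ X ⊆ N₀ ×ˢ N₀ := by
  have hX' : MeasurableSet (Prod.swap ⁻¹' X : Set (Y × Y)) := measurable_swap hX
  have hswapnull : (ν ⊗ₘ κ) (Prod.swap ⁻¹' X) = 0 := by
    have h1 : ((ν ⊗ₘ κ).map Prod.swap) X = 0 := hqi.2 hXnull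
    rwa [Measure.map_apply measurable_swap hX] at h1
  -- sections of X vanish a.e.
  have key : ∀ (Z : Set (Y × Y)), MeasurableSet Z → (ν ⊗ₘ κ) Z = 0 →
      ∀ᵐ t ∂ν, κ t (Prod.mk t ⁻¹' Z) = 0 := by
    intro Z hZ hZnull
    rw [Measure.compProd_apply hZ] at hZnull
    exact (lintegral_eq_zero_iff (Kernel.measurable_kernel_prodMk_left hZ)).mp hZnull
  set N₁ : Set Y := {t | κ t (Prod.mk t ⁻¹' X) ≠ 0} with hN₁def
  set N₂ : Set Y := {t | κ t (Prod.mk t ⁻¹' (Prod.swap ⁻¹' X)) ≠ 0} with hN₂def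
  have hm₁ : MeasurableSet N₁ :=
    (Kernel.measurable_kernel_prodMk_left hX) (measurableSet_singleton 0).compl
  have hm₂ : MeasurableSet N₂ :=
    (Kernel.measurable_kernel_prodMk_left hX') (measurableSet_singleton 0).compl
  have hn₁ : ν N₁ = 0 := key X hX hXnull
  have hn₂ : ν N₂ = 0 := key _ hX' hswapnull
  refine ⟨N₁ ∪ N₂, hm₁.union hm₂, measure_union_null hn₁ hn₂, ?_⟩
  rintro ⟨t, s⟩ hts
  obtain ⟨h1, h2⟩ := hXsub hts
  constructor
  · left
    have : κ t {s} ≤ κ t (Prod.mk t ⁻¹' X) :=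
      measure_mono (by intro x hx; simp only [Set.mem_singleton_iff] at hx; subst hx; exact hts)
    exact fun h0 => absurd (le_antisymm (h0 ▸ this) zero_le) h1.ne'
  · right
    have : κ s {t} ≤ κ s (Prod.mk s ⁻¹' (Prod.swap ⁻¹' X)) :=
      measure_mono (by intro x hx; simp only [Set.mem_singleton_iff] at hx; subst hx; exact hts)
    exact fun h0 => absurd (le_antisymm (h0 ▸ this) zero_le) h2.ne'
end

section
/- Let G be a group and H an abelian subgroup of G satisfying the relative ICC condition. If c ∈ G is such that the set of left cosets {h·c·H : h ∈ H} is finite, then c belongs to the normalizer N_G(H) of H in G. -/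
open Pointwise

-- well-definedness: equal cosets give equal conjugates
private lemma conj_eq_of_coset_eq {G : Type*} [Group G] (H : Subgroup G)
    (hab : ∀ a b : H, a * b = b * a) (c h k k' : G)
    (hk : k ∈ H) (hk' : k' ∈ H) (hh : h ∈ H)
    (hco : (k * c) • (H : Set G) = (k' * c) • (H : Set G)) :
    k * (c * h * c⁻¹) * k⁻¹ = k' * (c * h * c⁻¹) * k'⁻¹ := by
  have hu : c⁻¹ * k'⁻¹ * k * c ∈ H := by
    have := (leftCoset_eq_iff H).mp hco.symm
    -- (k'*c)⁻¹ * (k*c) ∈ H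
    simpa [mul_assoc] using this
  have hcomm := hab ⟨c⁻¹ * k'⁻¹ * k * c, hu⟩ ⟨h, hh⟩
  have hcomm' : (c⁻¹ * k'⁻¹ * k * c) * h = h * (c⁻¹ * k'⁻¹ * k * c) := by
    simpa using Subtype.ext_iff.mp hcomm
  have key : k'⁻¹ * k * (c * h * c⁻¹) = (c * h * c⁻¹) * (k'⁻¹ * k) := by
    have e1 : k'⁻¹ * k = c * (c⁻¹ * k'⁻¹ * k * c) * c⁻¹ := by group
    rw [e1]
    calc c * (c⁻¹ * k'⁻¹ * k * c) * c⁻¹ * (c * h * c⁻¹)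
        = c * ((c⁻¹ * k'⁻¹ * k * c) * h) * c⁻¹ := by group
      _ = c * (h * (c⁻¹ * k'⁻¹ * k * c)) * c⁻¹ := by rw [hcomm']
      _ = c * h * c⁻¹ * (c * (c⁻¹ * k'⁻¹ * k * c) * c⁻¹) := by group
  have := congrArg (fun x => k' * x * k⁻¹) key
  simpa [mul_assoc] using this

/-- Let `H` be an abelian subgroup of `G` satisfying the relative ICC condition
(for every `g ∉ H` the set `{h g h⁻¹ : h ∈ H}` is infinite). If the set of left cosets
`{h c H : h ∈ H}` is finite, then `c` belongs to the normalizer of `H` in `G`. -/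
theorem mem_normalizer_of_finite_cosets
    {G : Type*} [Group G] (H : Subgroup G)
    (hab : ∀ a b : H, a * b = b * a)
    (hicc : ∀ g : G, g ∉ H → {x : G | ∃ h ∈ H, x = h * g * h⁻¹}.Infinite)
    (c : G)
    (hfin : {X : Set G | ∃ h ∈ H, X = (h * c) • (H : Set G)}.Finite) :
    c ∈ Subgroup.normalizer (H : Set G) := by
  classical
  -- Step 1: c * h * c⁻¹ ∈ H for all h ∈ H
  have step1 : ∀ h ∈ H, c * h * c⁻¹ ∈ H := by
    intro h hh
    by_contra hg
    set g := c * h * c⁻¹ with hgdef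
    have hinf := hicc g hg
    -- the conjugate set is finite: it's the image of the coset set under F
    set F : Set G → G := fun X =>
      if hX : ∃ k, k ∈ H ∧ X = (k * c) • (H : Set G) then
        hX.choose * g * hX.choose⁻¹ else 1 with hF
    apply hinf
    apply Set.Finite.subset (hfin.image F)
    rintro x ⟨k, hk, rfl⟩
    refine ⟨(k * c) • (H : Set G), ⟨k, hk, rfl⟩, ?_⟩
    have hX : ∃ k', k' ∈ H ∧ (k * c) • (H : Set G) = (k' * c) • (H : Set G) :=
      ⟨k, hk, rfl⟩
    simp only [hF, dif_pos hX]
    exact conj_eq_of_coset_eq H hab c h hX.choose k hX.choose_spec.1 hk hh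
      hX.choose_spec.2.symm
  -- Step 2: c⁻¹ * h * c ∈ H for all h ∈ H
  have step2 : ∀ h ∈ H, c⁻¹ * h * c ∈ H := by
    intro h hh
    by_contra hg
    set g := c⁻¹ * h * c with hgdef
    have hinf := hicc g hg
    apply hinf
    apply Set.Finite.subset (Set.finite_singleton g)
    rintro x ⟨k, hk, rfl⟩
    have hv : c * k * c⁻¹ ∈ H := step1 k hk
    have hcomm := hab ⟨c * k * c⁻¹, hv⟩ ⟨h, hh⟩
    have hcomm' : (c * k * c⁻¹) * h = h * (c * k * c⁻¹) := by
      simpa using Subtype.ext_iff.mp hcomm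
    have : k * (c⁻¹ * h * c) * k⁻¹ = g := by
      have e1 : k = c⁻¹ * (c * k * c⁻¹) * c := by group
      rw [hgdef, e1]
      calc c⁻¹ * (c * k * c⁻¹) * c * (c⁻¹ * h * c) * (c⁻¹ * (c * k * c⁻¹) * c)⁻¹
          = c⁻¹ * ((c * k * c⁻¹) * h * (c * k * c⁻¹)⁻¹) * c := by group
        _ = c⁻¹ * (h * (c * k * c⁻¹) * (c * k * c⁻¹)⁻¹) * c := by rw [hcomm']
        _ = c⁻¹ * h * c := by group
    exact Set.mem_singleton_iff.mpr this
  rw [Subgroup.mem_normalizer_iff]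
  intro h
  constructor
  · exact fun hh => step1 h hh
  · intro hh
    have := step2 _ hh
    simpa [mul_assoc] using this
end

section
/- Assume the relative ICC condition. Let s and t be characters of H and suppose there exists a unitary operator V on ℓ²(C) such that V⁻¹ ∘ π_s(h) ∘ V = π_t(h) for all h ∈ H. Then there exists g ∈ N_G(H) such that s(h) = t(g·h·g⁻¹) for all h ∈ H. -/
/-- Assume the relative ICC condition. If `s` and `t` are characters of `H` and there
is a unitary `V` on `ℓ²(C)` with `V⁻¹ π_s(h) V = π_t(h)` for all `h ∈ H`, then there
exists `g` in the normalizer of `H` with `s(h) = t(g h g⁻¹)` for all `h ∈ H`. -/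
theorem exists_normalizer_conjugate_of_unitarily_equivalent_on_H
    {G : Type*} [Group G] [DecidableEq G]
    (H : Subgroup G) (hab : ∀ a b : H, a * b = b * a)
    (hicc : ∀ g : G, g ∉ H → {x : G | ∃ h ∈ H, x = h * g * h⁻¹}.Infinite)
    (C : Set G) (hC1 : (1 : G) ∈ C)
    (σ : G → C) (η : G → H)
    (hdec : ∀ g : G, g = (σ g : G) * (η g : G))
    (huniq : ∀ (g : G) (c : C) (h : H), g = (c : G) * (h : G) → c = σ g ∧ h = η g)
    (s t : H →* Circle)
    (πs πt : G →* (lp (fun _ : C => ℂ) 2 ≃ₗᵢ[ℂ] lp (fun _ : C => ℂ) 2))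
    (hπs : ∀ (g : G) (c : C), πs g (lp.single 2 c (1 : ℂ)) =
      (s (η (g * (c : G))) : ℂ) • lp.single 2 (σ (g * (c : G))) (1 : ℂ))
    (hπt : ∀ (g : G) (c : C), πt g (lp.single 2 c (1 : ℂ)) =
      (t (η (g * (c : G))) : ℂ) • lp.single 2 (σ (g * (c : G))) (1 : ℂ))
    (V : lp (fun _ : C => ℂ) 2 ≃ₗᵢ[ℂ] lp (fun _ : C => ℂ) 2)
    (hV : ∀ (h : H) (v : lp (fun _ : C => ℂ) 2),
      V.symm (πs (h : G) (V v)) = πt (h : G) v) :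
    ∃ g ∈ Subgroup.normalizer (H : Set G), ∀ h k : H, (k : G) = g * (h : G) * g⁻¹ → s h = t k := by
  classical
  have hcircnorm : ∀ z : Circle, ‖(z : ℂ)‖ = 1 := fun z => by
    rw [Circle.norm_coe]
  -- σ and η on elements of H
  have hone : ∀ h : H, σ (h : G) = ⟨1, hC1⟩ ∧ η (h : G) = h := by
    intro h
    obtain ⟨h1, h2⟩ := huniq (h : G) ⟨1, hC1⟩ h (by simp)
    exact ⟨h1.symm, h2.symm⟩
  set v : lp (fun _ : C => ℂ) 2 := V (lp.single 2 ⟨1, hC1⟩ 1) with hvdef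
  -- eigenvector property : πs h v = t h • v
  have heig : ∀ h : H, πs (h : G) v = (t h : ℂ) • v := by
    intro h
    have h1 : πt (h : G) (lp.single 2 ⟨1, hC1⟩ 1)
        = (t h : ℂ) • lp.single 2 ⟨1, hC1⟩ 1 := by
      have e := hπt (h : G) ⟨1, hC1⟩
      rw [show ((h : G) * ((⟨1, hC1⟩ : C) : G)) = (h : G) by simp] at e
      rw [e, (hone h).1, (hone h).2]
    have e2 := hV h (lp.single 2 ⟨1, hC1⟩ 1)
    rw [h1] at e2
    calc πs (h : G) v
        = V (V.symm (πs (h : G) (V (lp.single 2 ⟨1, hC1⟩ 1)))) := by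
          rw [V.apply_symm_apply]
      _ = V ((t h : ℂ) • lp.single 2 ⟨1, hC1⟩ 1) := by rw [e2]
      _ = (t h : ℂ) • v := by rw [map_smul]
  -- coordinate evaluation of basis vectors via inner products
  have hval : ∀ (w : lp (fun _ : C => ℂ) 2) (c : C),
      w c = @inner ℂ _ _ (lp.single 2 c (1 : ℂ)) w := by
    intro w c
    rw [lp.inner_single_left, RCLike.inner_apply]
    simp
  -- the coordinatewise eigenvalue relation
  have hcoord : ∀ (h : H) (c : C),
      (starRingEnd ℂ) ((s (η ((h : G)⁻¹ * (c : G)))) : ℂ) * v (σ ((h : G)⁻¹ * (c : G)))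
        = ((t h : ℂ)) * v c := by
    intro h c
    have h1 : lp.single 2 c (1 : ℂ) = πs (h : G) (πs ((h : G)⁻¹) (lp.single 2 c (1 : ℂ))) := by
      have h2 : (πs ((h : G))) * (πs ((h : G)⁻¹)) = 1 := by
        rw [← map_mul, mul_inv_cancel, map_one]
      calc lp.single 2 c (1 : ℂ)
          = ((πs ((h : G))) * (πs ((h : G)⁻¹))) (lp.single 2 c (1 : ℂ)) := by rw [h2]; rfl
        _ = πs (h : G) (πs ((h : G)⁻¹) (lp.single 2 c (1 : ℂ))) := rfl
    have hLHS : (πs (h : G) v) c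
        = (starRingEnd ℂ) ((s (η ((h : G)⁻¹ * (c : G)))) : ℂ) * v (σ ((h : G)⁻¹ * (c : G))) := by
      calc (πs (h : G) v) c
          = @inner ℂ _ _ (lp.single 2 c (1 : ℂ)) (πs (h : G) v) := hval _ c
        _ = @inner ℂ _ _ (πs (h : G) (πs ((h : G)⁻¹) (lp.single 2 c (1 : ℂ))))
              (πs (h : G) v) := by rw [← h1]
        _ = @inner ℂ _ _ (πs ((h : G)⁻¹) (lp.single 2 c (1 : ℂ))) v :=
              LinearIsometryEquiv.inner_map_map _ _ _
        _ = @inner ℂ _ _ (((s (η ((h : G)⁻¹ * (c : G)))) : ℂ) •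
              lp.single 2 (σ ((h : G)⁻¹ * (c : G))) (1 : ℂ)) v := by rw [hπs]
        _ = (starRingEnd ℂ) ((s (η ((h : G)⁻¹ * (c : G)))) : ℂ) *
              @inner ℂ _ _ (lp.single 2 (σ ((h : G)⁻¹ * (c : G))) (1 : ℂ)) v := by
              rw [inner_smul_left]
        _ = _ := by rw [← hval]
    have hRHS : (πs (h : G) v) c = (t h : ℂ) * v c := by
      rw [heig h]
      have := congrFun (lp.coeFn_smul ((t h : ℂ)) v) c
      simpa using this
    rw [← hLHS]; exact hRHS
  -- v is nonzero
  have hvne : ∃ d : C, v d ≠ 0 := by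
    by_contra hc
    push_neg at hc
    have hv0 : v = 0 := by
      have hiff := lp.eq_zero_iff_coeFn_eq_zero (f := v)
      rw [hiff]
      funext c
      simpa using hc c
    have h0 : (lp.single 2 (⟨1, hC1⟩ : C) (1 : ℂ) : lp (fun _ : C => ℂ) 2) = 0 := by
      have := congrArg V.symm hv0
      simpa [hvdef] using this
    have h1 := congrFun (congrArg (fun f : lp (fun _ : C => ℂ) 2 => (f : ∀ _ : C, ℂ)) h0) ⟨1, hC1⟩
    simp only [] at h1
    rw [lp.single_apply_self] at h1
    simp [lp.coeFn_zero] at h1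
  obtain ⟨d, hd0⟩ := hvne
  -- norm invariance along the orbit of d
  have hvnorm : ∀ h : H, ‖v (σ ((h : G) * (d : G)))‖ = ‖v d‖ := by
    intro h
    have hc := hcoord h⁻¹ d
    rw [show (((h⁻¹ : H) : G))⁻¹ = (h : G) by simp] at hc
    have := congrArg norm hc
    rw [norm_mul, norm_mul, RCLike.norm_conj, hcircnorm, hcircnorm, one_mul, one_mul] at this
    exact this
  -- the orbit of d is finite
  have hofin : (Set.range fun h : H => σ ((h : G) * (d : G))).Finite := by
    have hsum : Summable (fun c : C => ‖v c‖ ^ ((2 : ENNReal).toReal)) :=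
      (lp.memℓp v).summable (by norm_num)
    have htend := hsum.tendsto_cofinite_zero
    have hpos : 0 < ‖v d‖ ^ ((2 : ENNReal).toReal) := by
      apply Real.rpow_pos_of_pos
      exact norm_pos_iff.mpr hd0
    have hev : ∀ᶠ c in Filter.cofinite,
        ‖v c‖ ^ ((2 : ENNReal).toReal) < ‖v d‖ ^ ((2 : ENNReal).toReal) :=
      htend.eventually (gt_mem_nhds hpos)
    rw [Filter.eventually_cofinite] at hev
    apply hev.subset
    rintro c ⟨h, rfl⟩
    simp only [Set.mem_setOf_eq, not_lt]
    rw [hvnorm h]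
  -- Step B : d H d⁻¹ ⊆ H
  have hB : ∀ l : H, (d : G) * (l : G) * (d : G)⁻¹ ∈ H := by
    intro l
    by_contra hy
    have hcl : ∀ h : H,
        (h : G) * ((d : G) * (l : G) * (d : G)⁻¹) * (h : G)⁻¹
          = ((σ ((h : G) * (d : G)) : G)) * (l : G) * ((σ ((h : G) * (d : G)) : G))⁻¹ := by
      intro h
      set c : G := (σ ((h : G) * (d : G)) : G) with hcdef
      set m : G := (η ((h : G) * (d : G)) : G) with hmdef
      have e1 : (h : G) * (d : G) = c * m := hdec _
      have e2 : m * (l : G) = (l : G) * m :=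
        congrArg Subtype.val (hab (η ((h : G) * (d : G))) l)
      have e3 : (h : G) = c * m * (d : G)⁻¹ := by rw [← e1]; group
      rw [e3]
      have e4 : (c * m * (d : G)⁻¹) * ((d : G) * (l : G) * (d : G)⁻¹) * (c * m * (d : G)⁻¹)⁻¹
          = c * (m * (l : G) * m⁻¹) * c⁻¹ := by group
      rw [e4, e2]
      group
    have hsub : {x : G | ∃ h ∈ H, x = h * ((d : G) * (l : G) * (d : G)⁻¹) * h⁻¹}
        ⊆ (fun c : C => (c : G) * (l : G) * (c : G)⁻¹) ''
          (Set.range fun h : H => σ ((h : G) * (d : G))) := by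
      rintro x ⟨h, hh, rfl⟩
      exact ⟨σ (((⟨h, hh⟩ : H) : G) * (d : G)), ⟨⟨h, hh⟩, rfl⟩, (hcl ⟨h, hh⟩).symm⟩
    exact ((hofin.image _).subset hsub).not_infinite (hicc _ hy)
  -- Step C : d⁻¹ H d ⊆ H
  have hC' : ∀ h : H, (d : G)⁻¹ * (h : G) * (d : G) ∈ H := by
    intro h₀
    by_contra hx
    have hcl : ∀ h : H,
        (h : G) * ((d : G)⁻¹ * (h₀ : G) * (d : G)) * (h : G)⁻¹
          = (d : G)⁻¹ * (h₀ : G) * (d : G) := by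
      intro h
      have hk := hB h
      have e2 : ((d : G) * (h : G) * (d : G)⁻¹) * (h₀ : G)
          = (h₀ : G) * ((d : G) * (h : G) * (d : G)⁻¹) :=
        congrArg Subtype.val (hab ⟨_, hk⟩ h₀)
      calc (h : G) * ((d : G)⁻¹ * (h₀ : G) * (d : G)) * (h : G)⁻¹
          = (d : G)⁻¹ * (((d : G) * (h : G) * (d : G)⁻¹) * (h₀ : G)) *
              ((d : G) * (h : G)⁻¹ * (d : G)⁻¹) * (d : G) := by group
        _ = (d : G)⁻¹ * ((h₀ : G) * ((d : G) * (h : G) * (d : G)⁻¹)) *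
              ((d : G) * (h : G)⁻¹ * (d : G)⁻¹) * (d : G) := by rw [e2]
        _ = (d : G)⁻¹ * (h₀ : G) * (d : G) := by group
    have hsub : {x : G | ∃ h ∈ H, x = h * ((d : G)⁻¹ * (h₀ : G) * (d : G)) * h⁻¹}
        ⊆ {(d : G)⁻¹ * (h₀ : G) * (d : G)} := by
      rintro x ⟨h, hh, rfl⟩
      exact hcl ⟨h, hh⟩
    exact ((Set.finite_singleton _).subset hsub).not_infinite (hicc _ hx)
  -- d is in the normalizer
  have hdnorm : (d : G) ∈ Subgroup.normalizer (H : Set G) := by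
    rw [Subgroup.mem_normalizer_iff]
    intro g
    constructor
    · intro hg
      exact hB ⟨g, hg⟩
    · intro hg
      have h2 := hC' ⟨_, hg⟩
      have e : (d : G)⁻¹ * ((d : G) * g * (d : G)⁻¹) * (d : G) = g := by group
      rw [← e]
      exact h2
  -- σ and η on elements h * d
  have hσd : ∀ h : H, σ ((h : G) * (d : G)) = d ∧
      ((η ((h : G) * (d : G)) : G)) = (d : G)⁻¹ * (h : G) * (d : G) := by
    intro h
    obtain ⟨h1, h2⟩ := huniq ((h : G) * (d : G)) d ⟨_, hC' h⟩ (by group)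
    exact ⟨h1.symm, by rw [← h2]⟩
  -- the character identity
  have hst : ∀ h : H, s (η ((h : G) * (d : G))) = t h := by
    intro h
    have hc := hcoord h⁻¹ d
    rw [show (((h⁻¹ : H) : G))⁻¹ = (h : G) by simp] at hc
    rw [(hσd h).1] at hc
    have hmc := mul_right_cancel₀ hd0 hc
    rw [← Circle.coe_inv_eq_conj] at hmc
    have h5 : (s (η ((h : G) * (d : G))))⁻¹ = t h⁻¹ := Circle.coe_injective hmc
    have h6 := congrArg (·⁻¹) h5
    simpa using h6
  refine ⟨(d : G), hdnorm, ?_⟩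
  intro h k hk
  have hkey := hst k
  have e : (d : G)⁻¹ * (k : G) * (d : G) = (h : G) := by rw [hk]; group
  have hηk : η ((k : G) * (d : G)) = h := Subtype.ext ((hσd k).2.trans e)
  rw [hηk] at hkey
  exact hkey
end

section
/- Let s and t be characters of H, let V be a unitary operator on ℓ²(C) with V⁻¹ ∘ π_s(h) ∘ V = π_t(h) for all h ∈ H, and let y = V(ε_1) ∈ ℓ²(C) with coordinates (y_c)_{c ∈ C}. Then: (1) for all h ∈ H and c ∈ C, y_c · s(η(h·c)) = t(h) · y_{σ(h·c)}; and (2) for every c ∈ C with y_c ≠ 0, the set of left cosets {h·c·H : h ∈ H} is finite. -/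
open Pointwise

open scoped InnerProductSpace

/-- Let `s`, `t` be characters of `H` and `V` a unitary on `ℓ²(C)` intertwining
`π_s|_H` and `π_t|_H`, and let `y = V(ε_1)` with coordinates `(y_c)`. Then
(1) `y_c · s(η(h c)) = t(h) · y_{σ(h c)}` for all `h ∈ H`, `c ∈ C`; and
(2) for every `c` with `y_c ≠ 0`, the set of left cosets `{h c H : h ∈ H}` is finite. -/
theorem coordinates_of_intertwiner
    {G : Type*} [Group G] [DecidableEq G]
    (H : Subgroup G) (hab : ∀ a b : H, a * b = b * a)
    (C : Set G) (hC1 : (1 : G) ∈ C)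
    (σ : G → C) (η : G → H)
    (hdec : ∀ g : G, g = (σ g : G) * (η g : G))
    (huniq : ∀ (g : G) (c : C) (h : H), g = (c : G) * (h : G) → c = σ g ∧ h = η g)
    (s t : H →* Circle)
    (πs πt : G →* (lp (fun _ : C => ℂ) 2 ≃ₗᵢ[ℂ] lp (fun _ : C => ℂ) 2))
    (hπs : ∀ (g : G) (c : C), πs g (lp.single 2 c (1 : ℂ)) =
      (s (η (g * (c : G))) : ℂ) • lp.single 2 (σ (g * (c : G))) (1 : ℂ))
    (hπt : ∀ (g : G) (c : C), πt g (lp.single 2 c (1 : ℂ)) =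
      (t (η (g * (c : G))) : ℂ) • lp.single 2 (σ (g * (c : G))) (1 : ℂ))
    (V : lp (fun _ : C => ℂ) 2 ≃ₗᵢ[ℂ] lp (fun _ : C => ℂ) 2)
    (hV : ∀ (h : H) (v : lp (fun _ : C => ℂ) 2),
      V.symm (πs (h : G) (V v)) = πt (h : G) v)
    (y : C → ℂ)
    (hy : ∀ c : C, y c = (V (lp.single 2 (⟨1, hC1⟩ : C) (1 : ℂ)) : ∀ _ : C, ℂ) c) :
    (∀ (h : H) (c : C),
      y c * (s (η ((h : G) * (c : G))) : ℂ) = (t h : ℂ) * y (σ ((h : G) * (c : G)))) ∧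
    (∀ c : C, y c ≠ 0 →
      {X : Set G | ∃ h ∈ H, X = (h * (c : G)) • (H : Set G)}.Finite) := by
  set c0 : C := (⟨1, hC1⟩ : C) with hc0
  set w : lp (fun _ : C => ℂ) 2 := V (lp.single 2 c0 (1 : ℂ)) with hw
  -- σ(h·1) = 1 and η(h·1) = h
  have hσ1 : ∀ h : H, σ ((h : G) * (c0 : G)) = c0 ∧ η ((h : G) * (c0 : G)) = h := by
    intro h
    have := huniq ((h : G) * (c0 : G)) c0 h (by simp [hc0])
    exact ⟨this.1.symm, this.2.symm⟩
  -- Step A : πs h w = t h • w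
  have stepA : ∀ h : H, πs (h : G) w = (t h : ℂ) • w := by
    intro h
    have h1 : V.symm (πs (h : G) w) = πt (h : G) (lp.single 2 c0 (1 : ℂ)) :=
      hV h _
    rw [hπt, (hσ1 h).1, (hσ1 h).2] at h1
    have := congrArg V h1
    rw [V.apply_symm_apply, map_smul] at this
    exact this
  -- key relations about h⁻¹ * σ(h c)
  have key : ∀ (h : H) (c : C),
      σ ((h : G)⁻¹ * (σ ((h : G) * (c : G)) : G)) = c ∧
      η ((h : G)⁻¹ * (σ ((h : G) * (c : G)) : G)) = (η ((h : G) * (c : G)))⁻¹ := by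
    intro h c
    have hd := hdec ((h : G) * (c : G))
    have hxy : (h : G)⁻¹ * ((σ ((h : G) * (c : G))) : G)
        = (c : G) * ((((η ((h : G) * (c : G)))⁻¹ : H)) : G) := by
      push_cast
      calc (h : G)⁻¹ * ((σ ((h : G) * (c : G))) : G)
          = (h : G)⁻¹ * (((σ ((h : G) * (c : G))) : G) * ((η ((h : G) * (c : G))) : G))
              * ((η ((h : G) * (c : G))) : G)⁻¹ := by group
        _ = (h : G)⁻¹ * ((h : G) * (c : G)) * ((η ((h : G) * (c : G))) : G)⁻¹ := by
              rw [← hd]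
        _ = (c : G) * ((η ((h : G) * (c : G))) : G)⁻¹ := by group
    have := huniq _ c ((η ((h : G) * (c : G)))⁻¹) hxy
    exact ⟨this.1.symm, this.2.symm⟩
  -- Part 1
  have part1 : ∀ (h : H) (c : C),
      y c * (s (η ((h : G) * (c : G))) : ℂ) = (t h : ℂ) * y (σ ((h : G) * (c : G))) := by
    intro h c
    have e1 : ⟪lp.single 2 (σ ((h : G) * (c : G))) (1 : ℂ), πs (h : G) w⟫_ℂ
        = (t h : ℂ) * y (σ ((h : G) * (c : G))) := by
      rw [stepA h, inner_smul_right, lp.inner_single_left]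
      simp [RCLike.inner_apply, hy]
    have hinv : (πs (h : G)).symm = πs ((h : G)⁻¹) := by
      rw [map_inv]; rfl
    have hmap := (πs (h : G)).inner_map_map
      ((πs (h : G)).symm (lp.single 2 (σ ((h : G) * (c : G))) (1 : ℂ))) w
    rw [(πs (h : G)).apply_symm_apply] at hmap
    have e2 : ⟪lp.single 2 (σ ((h : G) * (c : G))) (1 : ℂ), πs (h : G) w⟫_ℂ
        = (s (η ((h : G) * (c : G))) : ℂ) * y c := by
      rw [hmap, hinv, hπs, (key h c).1, (key h c).2]
      rw [inner_smul_left, lp.inner_single_left]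
      have hconj : (starRingEnd ℂ) ((s ((η ((h : G) * (c : G)))⁻¹)) : ℂ)
          = (s (η ((h : G) * (c : G))) : ℂ) := by
        rw [map_inv, ← Circle.coe_inv_eq_conj, inv_inv]
      rw [hconj]
      simp [RCLike.inner_apply, hy]
    rw [e1] at e2
    rw [mul_comm (y c) _, ← e2]
  refine ⟨part1, ?_⟩
  -- Part 2
  intro c hc
  have hsum : Summable fun c' : C => ‖y c'‖ ^ (2 : ℝ) := by
    have h2 := (lp.memℓp w).summable (by norm_num : 0 < (2 : ENNReal).toReal)
    simp only [ENNReal.toReal_ofNat] at h2 ⊢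
    simpa [hy] using h2
  have hpos : (0 : ℝ) < ‖y c‖ ^ (2 : ℝ) := by
    have : 0 < ‖y c‖ := norm_pos_iff.mpr hc
    positivity
  have hFfin : {c' : C | ‖y c‖ ^ (2 : ℝ) ≤ ‖y c'‖ ^ (2 : ℝ)}.Finite := by
    have hev : ∀ᶠ c' : C in Filter.cofinite, ‖y c'‖ ^ (2 : ℝ) < ‖y c‖ ^ (2 : ℝ) :=
      hsum.tendsto_cofinite_zero.eventually (eventually_lt_nhds hpos)
    have := Filter.eventually_cofinite.mp hev
    simpa [not_lt] using this
  refine ((hFfin.image (fun c' : C => ((c' : G)) • (H : Set G)))).subset ?_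
  rintro X ⟨h, hh, rfl⟩
  set h' : H := ⟨h, hh⟩ with hh'
  refine ⟨σ ((h' : G) * (c : G)), ?_, ?_⟩
  · have hnorm := congrArg norm (part1 h' c)
    simp only [norm_mul] at hnorm
    have hs1 : ‖(s (η ((h' : G) * (c : G))) : ℂ)‖ = 1 := by
      exact Circle.norm_coe _
    have ht1 : ‖(t h' : ℂ)‖ = 1 := by exact Circle.norm_coe _
    rw [hs1, ht1, mul_one, one_mul] at hnorm
    show ‖y c‖ ^ (2 : ℝ) ≤ ‖y (σ (h * (c : G)))‖ ^ (2 : ℝ)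
    exact le_of_eq (by rw [hnorm])
  · have hd : h * (c : G) = ((σ ((h' : G) * (c : G))) : G) * ((η ((h' : G) * (c : G))) : G) :=
      hdec ((h' : G) * (c : G))
    show ((σ ((h' : G) * (c : G))) : G) • (H : Set G) = (h * (c : G)) • (H : Set G)
    conv_rhs => rw [hd]
    rw [mul_smul, smul_coe_set (η ((h' : G) * (c : G))).2]
end

section
/- Assume the relative ICC condition. For characters s and t of H, the representations π_s and π_t are unitarily equivalent (there exists a unitary U on ℓ²(C) with U ∘ π_t(x) = π_s(x) ∘ U for all x ∈ G) if and only if their restrictions to H are unitarily equivalent (there exists a unitary V on ℓ²(C) with V ∘ π_t(h) = π_s(h) ∘ V for all h ∈ H). -/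
open scoped ComplexConjugate ENNReal

private lemma sigma_eta_mul_h {G : Type*} [Group G] {H : Subgroup G} {C : Set G}
    {σ : G → C} {η : G → H}
    (hdec : ∀ g : G, g = (σ g : G) * (η g : G))
    (huniq : ∀ (g : G) (c : C) (h : H), g = (c : G) * (h : G) → c = σ g ∧ h = η g)
    (g : G) (x : H) : σ (g * (x : G)) = σ g ∧ η (g * (x : G)) = η g * x := by
  have h := huniq (g * (x : G)) (σ g) (η g * x)
    (by rw [Subgroup.coe_mul, ← mul_assoc, ← hdec g])
  exact ⟨h.1.symm, h.2.symm⟩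

private lemma sigma_coe {G : Type*} [Group G] {H : Subgroup G} {C : Set G}
    {σ : G → C} {η : G → H}
    (huniq : ∀ (g : G) (c : C) (h : H), g = (c : G) * (h : G) → c = σ g ∧ h = η g)
    (c : C) : σ (c : G) = c ∧ η (c : G) = 1 := by
  have h := huniq (c : G) c 1 (by simp)
  exact ⟨h.1.symm, h.2.symm⟩

private lemma icc_aux1 {G : Type*} [Group G] {H : Subgroup G}
    (hab : ∀ a b : H, a * b = b * a)
    (hicc : ∀ g : G, g ∉ H → {x : G | ∃ h ∈ H, x = h * g * h⁻¹}.Infinite)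
    {C : Set G} {σ : G → C} {η : G → H}
    (hdec : ∀ g : G, g = (σ g : G) * (η g : G))
    {d : G}
    (hfin : (Set.range fun h : H => σ ((h : G) * d)).Finite)
    (x : H) : d * (x : G) * d⁻¹ ∈ H := by
  classical
  by_contra hg
  set g0 : G := d * (x : G) * d⁻¹ with hg0
  have hxy : ∀ y : G, y ∈ H → y * (x : G) = (x : G) * y := by
    intro y hy
    have := congrArg (fun z : H => (z : G)) (hab ⟨y, hy⟩ x)
    simpa using this
  have hconst : ∀ k h : H, σ ((k : G) * d) = σ ((h : G) * d) →
      (k : G) * g0 * (k : G)⁻¹ = (h : G) * g0 * (h : G)⁻¹ := by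
    intro k h hσ
    have ham : ((η ((k : G) * d) : H) : G) ∈ H := (η ((k : G) * d)).2
    have hbm : ((η ((h : G) * d) : H) : G) ∈ H := (η ((h : G) * d)).2
    have hk' : (k : G) * d = (σ ((h : G) * d) : G) * ((η ((k : G) * d) : H) : G) := by
      rw [← hσ]; exact hdec _
    have hh' : (h : G) * d = (σ ((h : G) * d) : G) * ((η ((h : G) * d) : H) : G) := hdec _
    calc (k : G) * g0 * (k : G)⁻¹
        = ((k : G) * d) * (x : G) * ((k : G) * d)⁻¹ := by rw [hg0]; group
      _ = ((σ ((h : G) * d) : G) * ((η ((k : G) * d) : H) : G)) * (x : G) *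
          ((σ ((h : G) * d) : G) * ((η ((k : G) * d) : H) : G))⁻¹ := by
            conv_lhs => rw [hk']
      _ = (σ ((h : G) * d) : G) * (((η ((k : G) * d) : H) : G) * (x : G) *
          (((η ((k : G) * d) : H) : G))⁻¹) * ((σ ((h : G) * d) : G))⁻¹ := by group
      _ = (σ ((h : G) * d) : G) * ((x : G) * ((η ((k : G) * d) : H) : G) *
          (((η ((k : G) * d) : H) : G))⁻¹) * ((σ ((h : G) * d) : G))⁻¹ := by
            rw [hxy _ ham]
      _ = (σ ((h : G) * d) : G) * ((x : G) * ((η ((h : G) * d) : H) : G) *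
          (((η ((h : G) * d) : H) : G))⁻¹) * ((σ ((h : G) * d) : G))⁻¹ := by group
      _ = (σ ((h : G) * d) : G) * (((η ((h : G) * d) : H) : G) * (x : G) *
          (((η ((h : G) * d) : H) : G))⁻¹) * ((σ ((h : G) * d) : G))⁻¹ := by
            rw [hxy _ hbm]
      _ = ((σ ((h : G) * d) : G) * ((η ((h : G) * d) : H) : G)) * (x : G) *
          ((σ ((h : G) * d) : G) * ((η ((h : G) * d) : H) : G))⁻¹ := by group
      _ = ((h : G) * d) * (x : G) * ((h : G) * d)⁻¹ := by
            conv_rhs => rw [hh']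
      _ = (h : G) * g0 * (h : G)⁻¹ := by rw [hg0]; group
  have hsub : {y : G | ∃ h ∈ H, y = h * g0 * h⁻¹} ⊆
      (fun γ : C => if hk : ∃ k : H, σ ((k : G) * d) = γ
        then (hk.choose : G) * g0 * (hk.choose : G)⁻¹ else 1) ''
      (Set.range fun h : H => σ ((h : G) * d)) := by
    rintro y ⟨h, hh, rfl⟩
    refine ⟨σ (((⟨h, hh⟩ : H) : G) * d), ⟨⟨h, hh⟩, rfl⟩, ?_⟩
    have hex : ∃ k : H, σ ((k : G) * d) = σ (((⟨h, hh⟩ : H) : G) * d) := ⟨⟨h, hh⟩, rfl⟩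
    dsimp only
    rw [dif_pos hex]
    exact hconst hex.choose ⟨h, hh⟩ hex.choose_spec
  exact hicc g0 hg ((hfin.image _).subset hsub)

private lemma icc_aux2 {G : Type*} [Group G] {H : Subgroup G}
    (hab : ∀ a b : H, a * b = b * a)
    (hicc : ∀ g : G, g ∉ H → {x : G | ∃ h ∈ H, x = h * g * h⁻¹}.Infinite)
    {d : G}
    (hn1 : ∀ x : H, d * (x : G) * d⁻¹ ∈ H)
    (x : H) : d⁻¹ * (x : G) * d ∈ H := by
  by_contra hg
  have hsub : {y : G | ∃ h ∈ H, y = h * (d⁻¹ * (x : G) * d) * h⁻¹} ⊆ {d⁻¹ * (x : G) * d} := by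
    rintro y ⟨h, hh, rfl⟩
    have h1 : d * h * d⁻¹ ∈ H := hn1 ⟨h, hh⟩
    have hxy : (d * h * d⁻¹) * (x : G) = (x : G) * (d * h * d⁻¹) := by
      have := congrArg (fun z : H => (z : G)) (hab ⟨d * h * d⁻¹, h1⟩ x)
      simpa using this
    simp only [Set.mem_singleton_iff]
    calc h * (d⁻¹ * (x : G) * d) * h⁻¹
        = d⁻¹ * ((d * h * d⁻¹) * (x : G) * (d * h * d⁻¹)⁻¹) * d := by group
      _ = d⁻¹ * ((x : G) * (d * h * d⁻¹) * (d * h * d⁻¹)⁻¹) * d := by rw [hxy]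
      _ = d⁻¹ * (x : G) * d := by group
  exact hicc _ hg ((Set.finite_singleton _).subset hsub)


private lemma sigma_eta_mul_h' {G : Type*} [Group G] {H : Subgroup G} {C : Set G}
    {σ : G → C} {η : G → H}
    (hdec : ∀ g : G, g = (σ g : G) * (η g : G))
    (huniq : ∀ (g : G) (c : C) (h : H), g = (c : G) * (h : G) → c = σ g ∧ h = η g)
    (g : G) (x : H) : σ (g * (x : G)) = σ g ∧ η (g * (x : G)) = η g * x := by
  have h := huniq (g * (x : G)) (σ g) (η g * x)
    (by rw [Subgroup.coe_mul, ← mul_assoc, ← hdec g])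
  exact ⟨h.1.symm, h.2.symm⟩

private lemma sigma_coe' {G : Type*} [Group G] {H : Subgroup G} {C : Set G}
    {σ : G → C} {η : G → H}
    (huniq : ∀ (g : G) (c : C) (h : H), g = (c : G) * (h : G) → c = σ g ∧ h = η g)
    (c : C) : σ (c : G) = c ∧ η (c : G) = 1 := by
  have h := huniq (c : G) c 1 (by simp)
  exact ⟨h.1.symm, h.2.symm⟩

private lemma construct_U {G : Type*} [Group G] [DecidableEq G]
    (H : Subgroup G) (hab : ∀ a b : H, a * b = b * a)
    (C : Set G) (hC1 : (1 : G) ∈ C)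
    (σ : G → C) (η : G → H)
    (hdec : ∀ g : G, g = (σ g : G) * (η g : G))
    (huniq : ∀ (g : G) (c : C) (h : H), g = (c : G) * (h : G) → c = σ g ∧ h = η g)
    (s t : H →* Circle)
    (πs πt : G →* (lp (fun _ : C => ℂ) 2 ≃ₗᵢ[ℂ] lp (fun _ : C => ℂ) 2))
    (hπs : ∀ (g : G) (c : C), πs g (lp.single 2 c (1 : ℂ)) =
      (s (η (g * (c : G))) : ℂ) • lp.single 2 (σ (g * (c : G))) (1 : ℂ))
    (hπt : ∀ (g : G) (c : C), πt g (lp.single 2 c (1 : ℂ)) =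
      (t (η (g * (c : G))) : ℂ) • lp.single 2 (σ (g * (c : G))) (1 : ℂ))
    (n : G) (hn1 : ∀ x : H, n * (x : G) * n⁻¹ ∈ H)
    (hn2 : ∀ x : H, n⁻¹ * (x : G) * n ∈ H)
    (hB : ∀ (x : H) (hx : n⁻¹ * (x : G) * n ∈ H), (t x : ℂ) = ((s ⟨n⁻¹ * (x : G) * n, hx⟩ : Circle) : ℂ)) :
    ∃ U : lp (fun _ : C => ℂ) 2 ≃ₗᵢ[ℂ] lp (fun _ : C => ℂ) 2,
      ∀ (x : G) (v : lp (fun _ : C => ℂ) 2), U (πt x v) = πs x (U v) := by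
  classical
  have hr : 0 < (2 : ℝ≥0∞).toReal := by norm_num
  -- the underlying bijection of `C`
  have hdecomp : ∀ g : G, (σ g : G) = g * ((η g : G))⁻¹ := by
    intro g
    rw [eq_mul_inv_iff_mul_eq, ← hdec g]
  have hLeft : ∀ c : C, σ ((σ ((c : G) * n) : G) * n⁻¹) = c := by
    intro c
    have hmem : n * (((η ((c : G) * n) : H) : G))⁻¹ * n⁻¹ ∈ H := by
      simpa using hn1 (η ((c : G) * n))⁻¹
    have h1 : (σ ((c : G) * n) : G) * n⁻¹
        = (c : G) * ((⟨n * (((η ((c : G) * n) : H) : G))⁻¹ * n⁻¹, hmem⟩ : H) : G) := by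
      rw [hdecomp ((c : G) * n)]
      show (c : G) * n * (((η ((c : G) * n) : H) : G))⁻¹ * n⁻¹
          = (c : G) * (n * (((η ((c : G) * n) : H) : G))⁻¹ * n⁻¹)
      group
    rw [h1, (sigma_eta_mul_h' hdec huniq _ _).1, (sigma_coe' huniq c).1]
  have hRight : ∀ c : C, σ ((σ ((c : G) * n⁻¹) : G) * n) = c := by
    intro c
    have hmem : n⁻¹ * (((η ((c : G) * n⁻¹) : H) : G))⁻¹ * n ∈ H := by
      simpa using hn2 (η ((c : G) * n⁻¹))⁻¹
    have h1 : (σ ((c : G) * n⁻¹) : G) * n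
        = (c : G) * ((⟨n⁻¹ * (((η ((c : G) * n⁻¹) : H) : G))⁻¹ * n, hmem⟩ : H) : G) := by
      rw [hdecomp ((c : G) * n⁻¹)]
      show (c : G) * n⁻¹ * (((η ((c : G) * n⁻¹) : H) : G))⁻¹ * n
          = (c : G) * (n⁻¹ * (((η ((c : G) * n⁻¹) : H) : G))⁻¹ * n)
      group
    rw [h1, (sigma_eta_mul_h' hdec huniq _ _).1, (sigma_coe' huniq c).1]
  obtain ⟨eC, heC1, heC2⟩ : ∃ e : C ≃ C, (∀ c : C, e c = σ ((c : G) * n)) ∧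
      (∀ c : C, e.symm c = σ ((c : G) * n⁻¹)) :=
    ⟨{ toFun := fun c => σ ((c : G) * n)
       invFun := fun c => σ ((c : G) * n⁻¹)
       left_inv := fun c => hLeft c
       right_inv := fun c => hRight c }, fun _ => rfl, fun _ => rfl⟩
  obtain ⟨w, hw⟩ : ∃ w : C → Circle, ∀ c : C, w c = s (η ((c : G) * n)) := ⟨_, fun _ => rfl⟩
  have hwnorm : ∀ z : Circle, ‖(z : ℂ)‖ = 1 := fun z => by
    rw [Circle.norm_coe]
  have hmem1 : ∀ f : lp (fun _ : C => ℂ) 2,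
      Memℓp (fun c => (w (eC.symm c) : ℂ) * f (eC.symm c)) 2 := by
    intro f
    apply memℓp_gen
    have heq : (fun c : C => ‖(w (eC.symm c) : ℂ) * f (eC.symm c)‖ ^ (2 : ℝ≥0∞).toReal)
        = (fun c' : C => ‖f c'‖ ^ (2 : ℝ≥0∞).toReal) ∘ eC.symm := by
      funext c
      simp only [Function.comp_apply, norm_mul, hwnorm, one_mul]
    rw [heq]
    exact (Equiv.summable_iff eC.symm).mpr ((lp.memℓp f).summable hr)
  have hmem2 : ∀ f : lp (fun _ : C => ℂ) 2,
      Memℓp (fun c => ((w c : ℂ))⁻¹ * f (eC c)) 2 := by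
    intro f
    apply memℓp_gen
    have heq : (fun c : C => ‖((w c : ℂ))⁻¹ * f (eC c)‖ ^ (2 : ℝ≥0∞).toReal)
        = (fun c' : C => ‖f c'‖ ^ (2 : ℝ≥0∞).toReal) ∘ eC := by
      funext c
      simp only [Function.comp_apply, norm_mul, norm_inv, hwnorm, inv_one, one_mul]
    rw [heq]
    exact (Equiv.summable_iff eC).mpr ((lp.memℓp f).summable hr)
  let Tfun : lp (fun _ : C => ℂ) 2 → lp (fun _ : C => ℂ) 2 :=
    fun f => ⟨fun c => (w (eC.symm c) : ℂ) * f (eC.symm c), hmem1 f⟩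
  let Sfun : lp (fun _ : C => ℂ) 2 → lp (fun _ : C => ℂ) 2 :=
    fun f => ⟨fun c => ((w c : ℂ))⁻¹ * f (eC c), hmem2 f⟩
  have hT : ∀ f c, Tfun f c = (w (eC.symm c) : ℂ) * f (eC.symm c) := fun f c => rfl
  have hS : ∀ f c, Sfun f c = ((w c : ℂ))⁻¹ * f (eC c) := fun f c => rfl
  let U : lp (fun _ : C => ℂ) 2 ≃ₗᵢ[ℂ] lp (fun _ : C => ℂ) 2 :=
  { toFun := Tfun
    invFun := Sfun
    map_add' := by
      intro f g
      apply lp.ext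
      funext c
      have h1 : (Tfun (f + g)) c = (w (eC.symm c) : ℂ) * (f + g) (eC.symm c) := rfl
      have h2 : (Tfun f + Tfun g) c = Tfun f c + Tfun g c := by
        rw [lp.coeFn_add]; rfl
      rw [h1, h2, hT, hT, lp.coeFn_add]
      simp [mul_add]
    map_smul' := by
      intro a f
      apply lp.ext
      funext c
      show (w (eC.symm c) : ℂ) * (a • f) (eC.symm c)
          = ((a • Tfun f : lp (fun _ : C => ℂ) 2) : ∀ _ : C, ℂ) c
      rw [lp.coeFn_smul, lp.coeFn_smul]
      simp only [Pi.smul_apply, smul_eq_mul]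
      ring
    left_inv := by
      intro f
      apply lp.ext
      funext c
      have h1 : (Sfun (Tfun f)) c = ((w c : ℂ))⁻¹ * (Tfun f) (eC c) := rfl
      rw [h1, hT, Equiv.symm_apply_apply]
      rw [inv_mul_cancel_left₀ (Circle.coe_ne_zero (w c))]
    right_inv := by
      intro f
      apply lp.ext
      funext c
      have h1 : (Tfun (Sfun f)) c = (w (eC.symm c) : ℂ) * (Sfun f) (eC.symm c) := rfl
      rw [h1, hS, Equiv.apply_symm_apply]
      rw [mul_inv_cancel_left₀ (Circle.coe_ne_zero (w (eC.symm c)))]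
    norm_map' := by
      intro f
      show ‖Tfun f‖ = ‖f‖
      rw [lp.norm_eq_tsum_rpow hr (Tfun f), lp.norm_eq_tsum_rpow hr f]
      congr 1
      calc ∑' c : C, ‖Tfun f c‖ ^ (2 : ℝ≥0∞).toReal
          = ∑' c : C, ‖f (eC.symm c)‖ ^ (2 : ℝ≥0∞).toReal :=
            tsum_congr (fun c => by rw [hT, norm_mul, hwnorm, one_mul])
        _ = ∑' c : C, ‖f c‖ ^ (2 : ℝ≥0∞).toReal :=
            Equiv.tsum_eq eC.symm (fun c' : C => ‖f c'‖ ^ (2 : ℝ≥0∞).toReal) }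
  have hUcoord : ∀ (f : lp (fun _ : C => ℂ) 2) (c : C),
      U f c = (w (eC.symm c) : ℂ) * f (eC.symm c) := fun f c => rfl
  have hUsingle : ∀ c : C,
      U (lp.single 2 c (1 : ℂ)) = (w c : ℂ) • lp.single 2 (eC c) (1 : ℂ) := by
    intro c
    apply lp.ext
    funext c'
    have h1 : U (lp.single 2 c (1 : ℂ)) c'
        = (w (eC.symm c') : ℂ) * ((lp.single 2 c (1 : ℂ) : lp (fun _ : C => ℂ) 2) : ∀ _ : C, ℂ) (eC.symm c') :=
      hUcoord _ c'
    have h2 : (((w c : ℂ) • lp.single 2 (eC c) (1 : ℂ) : lp (fun _ : C => ℂ) 2) : ∀ _ : C, ℂ) c'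
        = (w c : ℂ) * ((lp.single 2 (eC c) (1 : ℂ) : lp (fun _ : C => ℂ) 2) : ∀ _ : C, ℂ) c' := by
      rw [lp.coeFn_smul]; simp [smul_eq_mul]
    rw [h1, h2]
    by_cases h : c' = eC c
    · rw [h, Equiv.symm_apply_apply, lp.single_apply_self, lp.single_apply_self]
    · have h3 : eC.symm c' ≠ c := fun hh => h (by rw [← hh, Equiv.apply_symm_apply])
      rw [lp.single_apply_ne _ _ _ h3, lp.single_apply_ne _ _ _ h, mul_zero, mul_zero]
  refine ⟨U, ?_⟩
  have hkey : ∀ (x : G) (c : C),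
      U (πt x (lp.single 2 c (1 : ℂ))) = πs x (U (lp.single 2 c (1 : ℂ))) := by
    intro x c
    -- identities for σ and η
    have hmemk : n⁻¹ * (((η (x * (c : G)) : H) : G))⁻¹ * n ∈ H := by
      simpa using hn2 (η (x * (c : G)))⁻¹
    set k : H := ⟨n⁻¹ * (((η (x * (c : G)) : H) : G))⁻¹ * n, hmemk⟩ with hk
    have fact1G : (σ (x * (c : G)) : G) * n = (x * (c : G) * n) * (k : G) := by
      rw [hdecomp (x * (c : G))]
      show x * (c : G) * (((η (x * (c : G)) : H) : G))⁻¹ * n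
          = x * (c : G) * n * (n⁻¹ * (((η (x * (c : G)) : H) : G))⁻¹ * n)
      group
    have fact1σ : σ ((σ (x * (c : G)) : G) * n) = σ (x * (c : G) * n) := by
      rw [fact1G]; exact (sigma_eta_mul_h' hdec huniq _ _).1
    have fact1η : η ((σ (x * (c : G)) : G) * n) = η (x * (c : G) * n) * k := by
      rw [fact1G]; exact (sigma_eta_mul_h' hdec huniq _ _).2
    have fact2G : x * (σ ((c : G) * n) : G) = (x * (c : G) * n) * (((η ((c : G) * n))⁻¹ : H) : G) := by
      rw [hdecomp ((c : G) * n)]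
      show x * ((c : G) * n * (((η ((c : G) * n) : H) : G))⁻¹)
          = x * (c : G) * n * (((η ((c : G) * n))⁻¹ : H) : G)
      push_cast
      group
    have fact2σ : σ (x * (σ ((c : G) * n) : G)) = σ (x * (c : G) * n) := by
      rw [fact2G]; exact (sigma_eta_mul_h' hdec huniq _ _).1
    have fact2η : η (x * (σ ((c : G) * n) : G)) = η (x * (c : G) * n) * (η ((c : G) * n))⁻¹ := by
      rw [fact2G]; exact (sigma_eta_mul_h' hdec huniq _ _).2
    have hkinv : (⟨n⁻¹ * ((η (x * (c : G)) : H) : G) * n, hn2 (η (x * (c : G)))⟩ : H) = k⁻¹ := by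
      ext
      show n⁻¹ * ((η (x * (c : G)) : H) : G) * n
          = (n⁻¹ * (((η (x * (c : G)) : H) : G))⁻¹ * n)⁻¹
      group
    have htk : (t (η (x * (c : G))) : ℂ) = ((s k⁻¹ : Circle) : ℂ) := by
      rw [hB (η (x * (c : G))) (hn2 (η (x * (c : G)))), hkinv]
    -- compute both sides
    rw [hπt x c, map_smul, hUsingle, hUsingle, map_smul, heC1 c,
      hπs x (σ ((c : G) * n)), smul_smul, smul_smul, heC1 (σ (x * (c : G))),
      fact1σ, fact2σ]
    congr 1
    rw [hw (σ (x * (c : G))), hw c, fact1η, fact2η, htk, map_mul, map_mul,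
      Circle.coe_mul, Circle.coe_mul, map_inv, Circle.coe_inv, map_inv, Circle.coe_inv]
    have h1 : ((s (η (x * (c : G) * n)) : Circle) : ℂ) ≠ 0 := Circle.coe_ne_zero _
    have h2 : ((s k : Circle) : ℂ) ≠ 0 := Circle.coe_ne_zero _
    have h3 : ((s (η ((c : G) * n)) : Circle) : ℂ) ≠ 0 := Circle.coe_ne_zero _
    field_simp
  intro x f
  have hsum : HasSum (fun c : C => lp.single 2 c (f c)) f :=
    lp.hasSum_single ENNReal.ofNat_ne_top f
  have hL : HasSum (fun c : C => U (πt x (lp.single 2 c (f c)))) (U (πt x f)) := by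
    have h1 := hsum.mapL (πt x).toLinearIsometry.toContinuousLinearMap
    have h2 := h1.mapL U.toLinearIsometry.toContinuousLinearMap
    simpa using h2
  have hR : HasSum (fun c : C => πs x (U (lp.single 2 c (f c)))) (πs x (U f)) := by
    have h1 := hsum.mapL U.toLinearIsometry.toContinuousLinearMap
    have h2 := h1.mapL (πs x).toLinearIsometry.toContinuousLinearMap
    simpa using h2
  have hterm : (fun c : C => U (πt x (lp.single 2 c (f c))))
      = fun c : C => πs x (U (lp.single 2 c (f c))) := by
    funext c
    have hsingle : (lp.single 2 c (f c) : lp (fun _ : C => ℂ) 2)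
        = f c • (lp.single 2 c (1 : ℂ) : lp (fun _ : C => ℂ) 2) := by
      rw [← lp.single_smul]
      congr 1
      simp [smul_eq_mul]
    rw [hsingle]
    simp only [map_smul, hkey x c]
  rw [hterm] at hL
  exact hL.unique hR


/-- Assume the relative ICC condition. For characters `s` and `t` of `H`, the
representations `π_s` and `π_t` are unitarily equivalent if and only if their
restrictions to `H` are unitarily equivalent. -/
theorem unitarily_equivalent_iff_restrictions_unitarily_equivalent
    {G : Type*} [Group G] [DecidableEq G]
    (H : Subgroup G) (hab : ∀ a b : H, a * b = b * a)
    (hicc : ∀ g : G, g ∉ H → {x : G | ∃ h ∈ H, x = h * g * h⁻¹}.Infinite)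
    (C : Set G) (hC1 : (1 : G) ∈ C)
    (σ : G → C) (η : G → H)
    (hdec : ∀ g : G, g = (σ g : G) * (η g : G))
    (huniq : ∀ (g : G) (c : C) (h : H), g = (c : G) * (h : G) → c = σ g ∧ h = η g)
    (s t : H →* Circle)
    (πs πt : G →* (lp (fun _ : C => ℂ) 2 ≃ₗᵢ[ℂ] lp (fun _ : C => ℂ) 2))
    (hπs : ∀ (g : G) (c : C), πs g (lp.single 2 c (1 : ℂ)) =
      (s (η (g * (c : G))) : ℂ) • lp.single 2 (σ (g * (c : G))) (1 : ℂ))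
    (hπt : ∀ (g : G) (c : C), πt g (lp.single 2 c (1 : ℂ)) =
      (t (η (g * (c : G))) : ℂ) • lp.single 2 (σ (g * (c : G))) (1 : ℂ)) :
    (∃ U : lp (fun _ : C => ℂ) 2 ≃ₗᵢ[ℂ] lp (fun _ : C => ℂ) 2,
      ∀ (x : G) (v : lp (fun _ : C => ℂ) 2), U (πt x v) = πs x (U v)) ↔
    (∃ V : lp (fun _ : C => ℂ) 2 ≃ₗᵢ[ℂ] lp (fun _ : C => ℂ) 2,
      ∀ (h : H) (v : lp (fun _ : C => ℂ) 2), V (πt (h : G) v) = πs (h : G) (V v)) := by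
  classical
  constructor
  · rintro ⟨U, hU⟩
    exact ⟨U, fun h v => hU (h : G) v⟩
  rintro ⟨V, hV⟩
  have hr : 0 < (2 : ℝ≥0∞).toReal := by norm_num
  set e1 : C := ⟨1, hC1⟩ with he1
  -- ε₁ is a t-eigenvector for πt restricted to H
  have hεt : ∀ x : H, πt (x : G) (lp.single 2 e1 (1 : ℂ))
      = (t x : ℂ) • lp.single 2 e1 (1 : ℂ) := by
    intro x
    have h := hπt (x : G) e1
    have hx1 : (x : G) * ((e1 : C) : G) = (x : G) := mul_one _
    rw [hx1] at h
    have hits := huniq (x : G) e1 x (by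
      show (x : G) = ((e1 : C) : G) * (x : G)
      rw [show ((e1 : C) : G) = 1 from rfl, one_mul])
    rw [← hits.1, ← hits.2] at h
    exact h
  set v : lp (fun _ : C => ℂ) 2 := V (lp.single 2 e1 (1 : ℂ)) with hvdef
  have heig : ∀ x : H, πs (x : G) v = (t x : ℂ) • v := by
    intro x
    rw [hvdef, ← hV x (lp.single 2 e1 (1 : ℂ)), hεt x, map_smul]
  -- coordinates of the eigenvector relation
  have hcoord : ∀ (x : H) (c : C), (t x : ℂ) * v c
      = (starRingEnd ℂ) ((s (η ((x : G)⁻¹ * (c : G))) : Circle) : ℂ)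
        * v (σ ((x : G)⁻¹ * (c : G))) := by
    intro x c
    have hinv : πs ((x : G))⁻¹ (πs (x : G) v) = v := by
      have h1 : πs ((x : G))⁻¹ (πs (x : G) v) = (πs ((x : G))⁻¹ * πs (x : G)) v := rfl
      rw [h1, ← map_mul, inv_mul_cancel, map_one]
      rfl
    have hA : (inner ℂ (lp.single 2 c (1 : ℂ) : lp (fun _ : C => ℂ) 2) (πs (x : G) v) : ℂ)
        = (t x : ℂ) * v c := by
      rw [heig x, inner_smul_right, lp.inner_single_left, RCLike.inner_apply, map_one, mul_one]
    have hB2 : (inner ℂ (lp.single 2 c (1 : ℂ) : lp (fun _ : C => ℂ) 2) (πs (x : G) v) : ℂ)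
        = (starRingEnd ℂ) ((s (η ((x : G)⁻¹ * (c : G))) : Circle) : ℂ)
          * v (σ ((x : G)⁻¹ * (c : G))) := by
      rw [← ((πs ((x : G))⁻¹).inner_map_map (lp.single 2 c (1 : ℂ)) (πs (x : G) v)), hinv,
        hπs ((x : G))⁻¹ c, inner_smul_left, lp.inner_single_left, RCLike.inner_apply,
        map_one, mul_one]
    rw [← hA, hB2]
  have hnz : ∀ z : Circle, ‖(z : ℂ)‖ = 1 := fun z => by
    rw [Circle.norm_coe]
  have habs : ∀ (x : H) (c : C), ‖v (σ ((x : G)⁻¹ * (c : G)))‖ = ‖v c‖ := by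
    intro x c
    have h := congrArg (fun z : ℂ => ‖z‖) (hcoord x c)
    simp only [norm_mul, RCLike.norm_conj, hnz, one_mul] at h
    exact h.symm
  -- a coordinate where v is non-zero
  have hex : ∃ d : C, v d ≠ 0 := by
    by_contra hno
    push_neg at hno
    have hvne : v ≠ 0 := by
      intro h0
      have h1 : (lp.single 2 e1 (1 : ℂ) : lp (fun _ : C => ℂ) 2) = 0 := by
        apply V.injective
        rw [map_zero, ← hvdef]
        exact h0
      have h2 := congrArg (fun f : lp (fun _ : C => ℂ) 2 => f e1) h1
      simp only [lp.single_apply_self, lp.coeFn_zero, Pi.zero_apply] at h2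
      exact one_ne_zero h2
    apply hvne
    apply lp.ext
    funext c
    simpa using hno c
  obtain ⟨d, hdne⟩ := hex
  -- the modulus of v is constant on the orbit of d
  have horb : ∀ x : H, ‖v (σ ((x : G) * (d : G)))‖ = ‖v d‖ := by
    intro x
    simpa using habs x⁻¹ d
  -- hence the orbit is finite
  have hSfin : (Set.range fun x : H => σ ((x : G) * (d : G))).Finite := by
    by_contra hinf
    have hsum2 := (lp.memℓp v).summable hr
    have hpos : (0 : ℝ) < ‖v d‖ ^ (2 : ℝ≥0∞).toReal :=
      Real.rpow_pos_of_pos (norm_pos_iff.mpr hdne) _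
    have hev := hsum2.tendsto_cofinite_zero.eventually_lt_const hpos
    have hfin2 := Filter.eventually_cofinite.mp hev
    apply hinf
    apply hfin2.subset
    rintro γ ⟨x, rfl⟩
    simp only [Set.mem_setOf_eq, not_lt]
    rw [horb x]
  -- by the relative ICC condition, d normalizes H
  have hn1 : ∀ x : H, (d : G) * (x : G) * (d : G)⁻¹ ∈ H := icc_aux1 hab hicc hdec hSfin
  have hn2 : ∀ x : H, (d : G)⁻¹ * (x : G) * (d : G) ∈ H := icc_aux2 hab hicc hn1
  have hstab : ∀ x : H, σ ((x : G) * (d : G)) = d ∧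
      η ((x : G) * (d : G)) = ⟨(d : G)⁻¹ * (x : G) * (d : G), hn2 x⟩ := by
    intro x
    have h := huniq ((x : G) * (d : G)) d ⟨(d : G)⁻¹ * (x : G) * (d : G), hn2 x⟩ (by
      show (x : G) * (d : G) = (d : G) * ((d : G)⁻¹ * (x : G) * (d : G))
      group)
    exact ⟨h.1.symm, h.2.symm⟩
  have hBmain : ∀ (x : H) (hx : (d : G)⁻¹ * (x : G) * (d : G) ∈ H),
      (t x : ℂ) = ((s ⟨(d : G)⁻¹ * (x : G) * (d : G), hx⟩ : Circle) : ℂ) := by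
    intro x hx
    have hc := hcoord x d
    have harg : ((x : G))⁻¹ * (d : G) = ((x⁻¹ : H) : G) * (d : G) := by norm_cast
    rw [harg, (hstab x⁻¹).1, (hstab x⁻¹).2] at hc
    have hel : (⟨(d : G)⁻¹ * ((x⁻¹ : H) : G) * (d : G), hn2 x⁻¹⟩ : H)
        = (⟨(d : G)⁻¹ * (x : G) * (d : G), hx⟩ : H)⁻¹ := by
      ext
      show (d : G)⁻¹ * ((x⁻¹ : H) : G) * (d : G) = ((d : G)⁻¹ * (x : G) * (d : G))⁻¹
      push_cast
      group
    rw [hel, map_inv, Circle.coe_inv_eq_conj, Complex.conj_conj] at hc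
    exact mul_right_cancel₀ hdne hc
  exact construct_U H hab C hC1 σ η hdec huniq s t πs πt hπs hπt (d : G) hn1 hn2 hBmain
end

section
/- Assume the relative ICC condition. For characters s and t of H, the representations π_s and π_t are unitarily equivalent (there exists a unitary U on ℓ²(C) with U ∘ π_t(x) = π_s(x) ∘ U for all x ∈ G) if and only if there exists g ∈ N_G(H) such that s(h) = t(g·h·g⁻¹) for all h ∈ H. -/
open scoped ENNReal

namespace UEq

noncomputable def evalCLM {ι : Type*} (i : ι) : lp (fun _ : ι => ℂ) 2 →L[ℂ] ℂ :=
  LinearMap.mkContinuous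
    { toFun := fun f => f i
      map_add' := fun f g => rfl
      map_smul' := fun c f => rfl }
    1 (fun f => by show ‖f i‖ ≤ 1 * ‖f‖; simpa using lp.norm_apply_le_norm (by norm_num) f i)

@[simp] lemma evalCLM_apply {ι : Type*} (i : ι) (f : lp (fun _ : ι => ℂ) 2) :
    evalCLM i f = f i := rfl

lemma coordFormula {G : Type*} [Group G] [DecidableEq G]
    (H : Subgroup G) (C : Set G)
    (σ : G → C) (η : G → H)
    (hdec : ∀ g : G, g = (σ g : G) * (η g : G))
    (huniq : ∀ (g : G) (c : C) (h : H), g = (c : G) * (h : G) → c = σ g ∧ h = η g)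
    (u : H →* Circle)
    (π : G →* (lp (fun _ : C => ℂ) 2 ≃ₗᵢ[ℂ] lp (fun _ : C => ℂ) 2))
    (hπ : ∀ (g : G) (c : C), π g (lp.single 2 c (1 : ℂ)) =
      (u (η (g * (c : G))) : ℂ) • lp.single 2 (σ (g * (c : G))) (1 : ℂ))
    (x : G) (v : lp (fun _ : C => ℂ) 2) (d : C) :
    (π x v) d = (u (η (x⁻¹ * (d : G))) : ℂ)⁻¹ * v (σ (x⁻¹ * (d : G))) := by
  classical
  set cs := σ (x⁻¹ * (d : G)) with hcs
  have hkey : x * (cs : G) = (d : G) * (((η (x⁻¹ * (d : G)))⁻¹ : H) : G) := by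
    have h0 := hdec (x⁻¹ * (d : G))
    rw [← hcs] at h0
    have hc' : (cs : G) = x⁻¹ * (d : G) * ((η (x⁻¹ * (d : G)) : G))⁻¹ :=
      eq_mul_inv_of_mul_eq h0.symm
    push_cast
    rw [hc']; group
  obtain ⟨hσ1, hη1⟩ := huniq (x * (cs : G)) d ((η (x⁻¹ * (d : G)))⁻¹) hkey
  -- expansion
  have h1 : HasSum (fun c : C => lp.single 2 c (v c)) v :=
    lp.hasSum_single (by norm_num) v
  have h2 : HasSum (fun c : C => (π x) (lp.single 2 c (v c))) ((π x) v) := by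
    have := h1.mapL ((π x).toLinearIsometry.toContinuousLinearMap)
    simpa using this
  have h3 : HasSum (fun c : C => ((π x) (lp.single 2 c (v c))) d) (((π x) v) d) := by
    have := h2.mapL (evalCLM d)
    simpa using this
  have h4 : (fun c : C => ((π x) (lp.single 2 c (v c))) d) =
      (fun c : C => v c * ((u (η (x * (c : G))) : ℂ) *
        (lp.single 2 (σ (x * (c : G))) (1 : ℂ) : lp (fun _ : C => ℂ) 2) d)) := by
    funext c
    have hs := lp.single_smul (E := fun _ : C => ℂ) 2 c (v c) (1 : ℂ)
    rw [smul_eq_mul, mul_one] at hs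
    rw [hs, map_smul, hπ]
    simp [mul_assoc]
  rw [h4] at h3
  have h5 : HasSum (fun c : C => v c * ((u (η (x * (c : G))) : ℂ) *
        (lp.single 2 (σ (x * (c : G))) (1 : ℂ) : lp (fun _ : C => ℂ) 2) d))
      (v cs * ((u (η (x * (cs : G))) : ℂ) *
        (lp.single 2 (σ (x * (cs : G))) (1 : ℂ) : lp (fun _ : C => ℂ) 2) d)) := by
    apply hasSum_single (f := fun c : C => v c * ((u (η (x * (c : G))) : ℂ) *
        (lp.single 2 (σ (x * (c : G))) (1 : ℂ) : lp (fun _ : C => ℂ) 2) d)) cs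
    intro c hc
    have hne : d ≠ σ (x * (c : G)) := by
      intro hd
      apply hc
      have h0 := hdec (x * (c : G))
      rw [← hd] at h0
      have : x⁻¹ * (d : G) = (c : G) * (((η (x * (c : G)))⁻¹ : H) : G) := by
        have hd' : (d : G) = x * (c : G) * ((η (x * (c : G)) : G))⁻¹ :=
          eq_mul_inv_of_mul_eq h0.symm
        push_cast
        rw [hd']; group
      exact ((huniq _ c _ this).1).trans hcs.symm
    rw [lp.single_apply_ne _ _ _ hne]
    ring
  have := h3.unique h5
  rw [this, ← hσ1]
  rw [lp.single_apply_self, ← hη1]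
  simp [map_inv]
  ring


lemma wPerm_mem {ι : Type*} (e : ι → ι) (he : Function.Injective e) (w : ι → ℂ)
    (hw : ∀ i, ‖w i‖ = 1) (f : lp (fun _ : ι => ℂ) 2) :
    Memℓp (fun i => w i * f (e i)) 2 := by
  apply memℓp_gen
  have hf : Summable fun i => ‖f i‖ ^ (2 : ℝ≥0∞).toReal :=
    (memℓp_gen_iff (by norm_num)).1 (lp.memℓp f)
  have h2 : Summable fun i => ‖f (e i)‖ ^ (2 : ℝ≥0∞).toReal :=
    hf.comp_injective he
  refine h2.congr fun i => ?_
  rw [norm_mul, hw, one_mul]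

noncomputable def wPerm {ι : Type*} (e : ι ≃ ι) (w : ι → ℂ) (hw : ∀ i, ‖w i‖ = 1) :
    lp (fun _ : ι => ℂ) 2 ≃ₗᵢ[ℂ] lp (fun _ : ι => ℂ) 2 where
  toLinearEquiv :=
  { toFun := fun f => ⟨fun i => w i * f (e i), wPerm_mem e e.injective w hw f⟩
    invFun := fun f => ⟨fun i => (w (e.symm i))⁻¹ * f (e.symm i),
      wPerm_mem e.symm e.symm.injective _ (fun i => by
        rw [norm_inv, hw, inv_one]) f⟩
    map_add' := fun f g => by
      apply lp.ext
      funext i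
      simp only [lp.coeFn_add, Pi.add_apply]
      exact mul_add _ _ _
    map_smul' := fun c f => by
      apply lp.ext
      funext i
      simp only [lp.coeFn_smul, Pi.smul_apply, RingHom.id_apply, smul_eq_mul]
      ring
    left_inv := fun f => by
      apply lp.ext
      funext i
      have : w (e.symm i) ≠ 0 := by
        intro h; have := hw (e.symm i); rw [h] at this; simp at this
      simp only []
      show (w (e.symm i))⁻¹ * (w (e.symm i) * f (e (e.symm i))) = f i
      rw [e.apply_symm_apply, inv_mul_cancel_left₀ this]
    right_inv := fun f => by
      apply lp.ext
      funext i
      have : w i ≠ 0 := by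
        intro h; have := hw i; rw [h] at this; simp at this
      show w i * ((w (e.symm (e i)))⁻¹ * f (e.symm (e i))) = f i
      rw [e.symm_apply_apply, mul_inv_cancel_left₀ this] }
  norm_map' := fun f => by
    have hp : 0 < (2 : ℝ≥0∞).toReal := by norm_num
    rw [lp.norm_eq_tsum_rpow hp, lp.norm_eq_tsum_rpow hp]
    congr 1
    exact (tsum_congr fun i => by
      show ‖w i * f (e i)‖ ^ _ = ‖f (e i)‖ ^ _
      rw [norm_mul, hw, one_mul]).trans (e.tsum_eq _)

@[simp] lemma wPerm_apply {ι : Type*} (e : ι ≃ ι) (w : ι → ℂ) (hw : ∀ i, ‖w i‖ = 1)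
    (f : lp (fun _ : ι => ℂ) 2) (i : ι) : (wPerm e w hw f) i = w i * f (e i) := rfl



end UEq

open UEq

/-- Assume the relative ICC condition. For characters `s` and `t` of `H`, the
representations `π_s` and `π_t` are unitarily equivalent if and only if there is
`g` in the normalizer of `H` with `s(h) = t(g h g⁻¹)` for all `h ∈ H`. -/
theorem unitarily_equivalent_iff_normalizer_conjugate
    {G : Type*} [Group G] [DecidableEq G]
    (H : Subgroup G) (hab : ∀ a b : H, a * b = b * a)
    (hicc : ∀ g : G, g ∉ H → {x : G | ∃ h ∈ H, x = h * g * h⁻¹}.Infinite)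
    (C : Set G) (hC1 : (1 : G) ∈ C)
    (σ : G → C) (η : G → H)
    (hdec : ∀ g : G, g = (σ g : G) * (η g : G))
    (huniq : ∀ (g : G) (c : C) (h : H), g = (c : G) * (h : G) → c = σ g ∧ h = η g)
    (s t : H →* Circle)
    (πs πt : G →* (lp (fun _ : C => ℂ) 2 ≃ₗᵢ[ℂ] lp (fun _ : C => ℂ) 2))
    (hπs : ∀ (g : G) (c : C), πs g (lp.single 2 c (1 : ℂ)) =
      (s (η (g * (c : G))) : ℂ) • lp.single 2 (σ (g * (c : G))) (1 : ℂ))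
    (hπt : ∀ (g : G) (c : C), πt g (lp.single 2 c (1 : ℂ)) =
      (t (η (g * (c : G))) : ℂ) • lp.single 2 (σ (g * (c : G))) (1 : ℂ)) :
    (∃ U : lp (fun _ : C => ℂ) 2 ≃ₗᵢ[ℂ] lp (fun _ : C => ℂ) 2,
      ∀ (x : G) (v : lp (fun _ : C => ℂ) 2), U (πt x v) = πs x (U v)) ↔
    (∃ g ∈ Subgroup.normalizer (H : Set G), ∀ h k : H, (k : G) = g * (h : G) * g⁻¹ → s h = t k) := by
  have hCnorm : ∀ z : Circle, ‖(z : ℂ)‖ = 1 := fun z => by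
    exact Circle.norm_coe z
  constructor
  · rintro ⟨U, hU⟩
    set one : C := (⟨1, hC1⟩ : C) with hone
    set ε1 : lp (fun _ : C => ℂ) 2 := lp.single 2 one (1 : ℂ) with hε1
    set v : lp (fun _ : C => ℂ) 2 := U ε1 with hv
    -- the eigen relation
    have eigen : ∀ (h : H) (d : C),
        (s (η (((h : G))⁻¹ * (d : G))) : ℂ)⁻¹ * v (σ (((h : G))⁻¹ * (d : G)))
          = (t h : ℂ) * v d := by
      intro h d
      have e1 : πt (h : G) ε1 = (t h : ℂ) • ε1 := by
        obtain ⟨hσh, hηh⟩ := huniq ((h : G) * ((one : C) : G)) one h (by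
          simp [hone])
        rw [hε1, hπt (h : G) one, ← hσh, ← hηh]
      have e2 : πs (h : G) v = (t h : ℂ) • v := by
        rw [hv, ← hU, e1, map_smul]
      have e3 := coordFormula H C σ η hdec huniq s πs hπs ((h : G)) v d
      rw [e2] at e3
      rw [lp.coeFn_smul, Pi.smul_apply, smul_eq_mul] at e3
      exact e3.symm
    -- v is nonzero somewhere
    have hvne : ∃ c : C, v c ≠ 0 := by
      by_contra hvz
      push_neg at hvz
      have hv0 : v = 0 := lp.ext (funext fun c => by simpa using hvz c)
      have hε0 : ε1 = 0 := by
        have := congrArg U.symm hv0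
        simpa [hv] using this
      have := congrArg (fun f : lp (fun _ : C => ℂ) 2 => f one) hε0
      simp only [hε1] at this
      rw [lp.single_apply_self] at this
      simp at this
    obtain ⟨c₀, hc₀⟩ := hvne
    -- norm relation on the orbit
    have hnorm : ∀ h : H, ‖v (σ ((h : G) * (c₀ : G)))‖ = ‖v c₀‖ := by
      intro h
      have := eigen h⁻¹ c₀
      have harg : (((h⁻¹ : H) : G))⁻¹ = (h : G) := by push_cast; group
      rw [harg] at this
      have hn := congrArg (fun z : ℂ => ‖z‖) this
      simp only [norm_mul, norm_inv, hCnorm, inv_one, one_mul] at hn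
      exact hn
    -- the orbit is finite
    have hsum : Summable fun d : C => ‖v d‖ ^ (2 : ℝ≥0∞).toReal :=
      (memℓp_gen_iff (by norm_num)).1 (lp.memℓp v)
    have hεpos : (0 : ℝ) < ‖v c₀‖ ^ (2 : ℝ≥0∞).toReal := by
      have : (0:ℝ) < ‖v c₀‖ := norm_pos_iff.mpr hc₀
      positivity
    have hfin : {d : C | ‖v c₀‖ ^ (2 : ℝ≥0∞).toReal ≤ ‖v d‖ ^ (2 : ℝ≥0∞).toReal}.Finite := by
      have hev := hsum.tendsto_cofinite_zero.eventually_lt_const hεpos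
      simpa [Filter.eventually_cofinite, not_lt] using hev
    have hSfin : (Set.range fun h : H => σ ((h : G) * (c₀ : G))).Finite := by
      apply hfin.subset
      rintro _ ⟨h, rfl⟩
      simp only [Set.mem_setOf_eq]
      rw [hnorm h]
    set g : G := (c₀ : G) with hg
    -- step 1 : conjugation by g maps H into H
    have step1 : ∀ w : H, g * (w : G) * g⁻¹ ∈ H := by
      intro w
      by_contra hu
      have hinf := hicc _ hu
      have hsub : {x : G | ∃ h ∈ H, x = h * (g * (w : G) * g⁻¹) * h⁻¹} ⊆
          (fun d : C => (d : G) * (w : G) * (d : G)⁻¹) ''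
            (Set.range fun h : H => σ ((h : G) * (c₀ : G))) := by
        rintro x ⟨h, hh, rfl⟩
        refine ⟨σ (h * g), ⟨⟨h, hh⟩, rfl⟩, ?_⟩
        have h0 : h * g = (σ (h * g) : G) * (η (h * g) : G) := hdec (h * g)
        have hh' : h = (σ (h * g) : G) * (η (h * g) : G) * g⁻¹ :=
          eq_mul_inv_of_mul_eq h0
        have hcomm := congrArg (fun z : H => (z : G)) (hab (η (h * g)) w)
        push_cast at hcomm
        have key : h * (g * (w : G) * g⁻¹) * h⁻¹ =
            (σ (h * g) : G) * ((η (h * g) : G) * (w : G)) *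
              (((η (h * g) : G))⁻¹ * ((σ (h * g) : G))⁻¹) := by
          conv_lhs => rw [hh']
          group
        rw [key, hcomm]
        group
      exact (Set.not_infinite.mpr ((hSfin.image _).subset hsub)) hinf
    -- step 2 : conjugation by g⁻¹ maps H into H
    have step2 : ∀ w : H, g⁻¹ * (w : G) * g ∈ H := by
      intro w
      by_contra hu
      have hinf := hicc _ hu
      have hsub : {x : G | ∃ h ∈ H, x = h * (g⁻¹ * (w : G) * g) * h⁻¹} ⊆
          {g⁻¹ * (w : G) * g} := by
        rintro x ⟨h, hh, rfl⟩
        simp only [Set.mem_singleton_iff]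
        have hh' : g * h * g⁻¹ ∈ H := step1 ⟨h, hh⟩
        have hcomm := congrArg (fun z : H => (z : G)) (hab (⟨g * h * g⁻¹, hh'⟩ : H) w)
        push_cast at hcomm
        have key : h * (g⁻¹ * (w : G) * g) * h⁻¹ =
            g⁻¹ * ((g * h * g⁻¹) * (w : G) * (g * h * g⁻¹)⁻¹) * g := by group
        rw [key, hcomm]
        group
      exact (Set.not_infinite.mpr ((Set.finite_singleton _).subset hsub)) hinf
    have hgN : g ∈ Subgroup.normalizer (H : Set G) := by
      rw [Subgroup.mem_normalizer_iff]
      intro n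
      constructor
      · intro hn; exact step1 ⟨n, hn⟩
      · intro hn
        have := step2 ⟨g * n * g⁻¹, hn⟩
        rwa [show g⁻¹ * (g * n * g⁻¹) * g = n by group] at this
    refine ⟨g, hgN, ?_⟩
    intro h k hk
    have harg : ((k : G))⁻¹ * (c₀ : G) = (c₀ : G) * (((h⁻¹ : H)) : G) := by
      rw [hk]; push_cast; rw [hg]; group
    obtain ⟨hσk, hηk⟩ := huniq (((k : G))⁻¹ * (c₀ : G)) c₀ h⁻¹ harg
    have := eigen k c₀
    rw [← hσk, ← hηk] at this
    have hsinv : (s h⁻¹ : ℂ)⁻¹ = (s h : ℂ) := by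
      rw [map_inv]
      simp
    rw [hsinv] at this
    have := mul_right_cancel₀ hc₀ this
    exact Circle.coe_injective this
  · rintro ⟨g, hgN, hst⟩
    have hmem1 : ∀ n : G, n ∈ H → g * n * g⁻¹ ∈ H := fun n hn =>
      (Subgroup.mem_normalizer_iff.1 hgN n).1 hn
    have hmem2 : ∀ n : G, n ∈ H → g⁻¹ * n * g ∈ H := by
      intro n hn
      apply (Subgroup.mem_normalizer_iff.1 hgN (g⁻¹ * n * g)).2
      rwa [show g * (g⁻¹ * n * g) * g⁻¹ = n by group]
    have hts : ∀ k : H, (t k : ℂ) = (s ⟨g⁻¹ * (k : G) * g, hmem2 _ k.2⟩ : ℂ) := by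
      intro k
      have h1 : ((k : H) : G) = g * ((⟨g⁻¹ * (k : G) * g, hmem2 _ k.2⟩ : H) : G) * g⁻¹ := by
        push_cast; group
      exact (congrArg (fun z : Circle => (z : ℂ)) (hst _ k h1)).symm
    -- the underlying bijection of the intertwiner
    have hleft : ∀ d : C, σ ((σ ((d : G) * g⁻¹) : G) * g) = d := by
      intro d
      have hp' : (σ ((d : G) * g⁻¹) : G) =
          (d : G) * g⁻¹ * ((η ((d : G) * g⁻¹) : G))⁻¹ :=
        eq_mul_inv_of_mul_eq (hdec _).symm
      have hmH : g⁻¹ * ((η ((d : G) * g⁻¹) : G))⁻¹ * g ∈ H :=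
        hmem2 _ (H.inv_mem (η _).2)
      obtain ⟨h1, _⟩ := huniq ((σ ((d : G) * g⁻¹) : G) * g) d
        ⟨g⁻¹ * ((η ((d : G) * g⁻¹) : G))⁻¹ * g, hmH⟩ (by rw [hp']; group)
      exact h1.symm
    have hright : ∀ d : C, σ ((σ ((d : G) * g) : G) * g⁻¹) = d := by
      intro d
      have hp' : (σ ((d : G) * g) : G) =
          (d : G) * g * ((η ((d : G) * g) : G))⁻¹ :=
        eq_mul_inv_of_mul_eq (hdec _).symm
      have hmH : g * ((η ((d : G) * g) : G))⁻¹ * g⁻¹ ∈ H :=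
        hmem1 _ (H.inv_mem (η _).2)
      obtain ⟨h1, _⟩ := huniq ((σ ((d : G) * g) : G) * g⁻¹) d
        ⟨g * ((η ((d : G) * g) : G))⁻¹ * g⁻¹, hmH⟩ (by rw [hp']; group)
      exact h1.symm
    set e : C ≃ C := ⟨fun d => σ ((d : G) * g⁻¹), fun d => σ ((d : G) * g),
      fun d => hleft d, fun d => hright d⟩ with hedef
    have he : ∀ d : C, e d = σ ((d : G) * g⁻¹) := fun d => rfl
    have hwmem : ∀ d : C, g⁻¹ * ((η ((d : G) * g⁻¹) : G))⁻¹ * g ∈ H := fun d =>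
      hmem2 _ (H.inv_mem (η _).2)
    set w : C → ℂ :=
      fun d => ((s ⟨g⁻¹ * ((η ((d : G) * g⁻¹) : G))⁻¹ * g, hwmem d⟩ : Circle) : ℂ)
      with hwdef
    have hw : ∀ d, ‖w d‖ = 1 := fun d => hCnorm _
    refine ⟨wPerm e w hw, ?_⟩
    intro x v
    apply lp.ext
    funext d
    show (wPerm e w hw ((πt x) v)) d = ((πs x) (wPerm e w hw v)) d
    -- abbreviations (as equalities)
    have hb0 : x⁻¹ * (d : G) * g⁻¹ =
        (σ (x⁻¹ * (d : G) * g⁻¹) : G) * (η (x⁻¹ * (d : G) * g⁻¹) : G) := hdec _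
    have hp' : (σ ((d : G) * g⁻¹) : G) =
        (d : G) * g⁻¹ * ((η ((d : G) * g⁻¹) : G))⁻¹ :=
      eq_mul_inv_of_mul_eq (hdec _).symm
    have claim1 := huniq (x⁻¹ * ((σ ((d : G) * g⁻¹) : C) : G)) (σ (x⁻¹ * (d : G) * g⁻¹))
        (η (x⁻¹ * (d : G) * g⁻¹) * (η ((d : G) * g⁻¹))⁻¹) (by
      push_cast
      conv_lhs => rw [hp']
      rw [show x⁻¹ * ((d : G) * g⁻¹ * ((η ((d : G) * g⁻¹) : G))⁻¹) =
        (x⁻¹ * (d : G) * g⁻¹) * ((η ((d : G) * g⁻¹) : G))⁻¹ by group]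
      conv_lhs => rw [hb0]
      group)
    have hσa' : (σ (x⁻¹ * (d : G)) : G) =
        x⁻¹ * (d : G) * ((η (x⁻¹ * (d : G)) : G))⁻¹ :=
      eq_mul_inv_of_mul_eq (hdec _).symm
    have hMH : g * ((η (x⁻¹ * (d : G)) : G))⁻¹ * g⁻¹ ∈ H :=
      hmem1 _ (H.inv_mem (η _).2)
    obtain ⟨M, hM⟩ : ∃ M : H, (M : G) = g * ((η (x⁻¹ * (d : G)) : G))⁻¹ * g⁻¹ :=
      ⟨⟨_, hMH⟩, rfl⟩
    obtain ⟨A, hA⟩ : ∃ A : H, (A : G) = g⁻¹ * ((η ((d : G) * g⁻¹) : G)) * g :=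
      ⟨⟨_, hmem2 _ (η _).2⟩, rfl⟩
    obtain ⟨B, hB⟩ : ∃ B : H, (B : G) = g⁻¹ * ((η (x⁻¹ * (d : G) * g⁻¹) : G)) * g :=
      ⟨⟨_, hmem2 _ (η _).2⟩, rfl⟩
    have claim2 := huniq ((σ (x⁻¹ * (d : G)) : G) * g⁻¹) (σ (x⁻¹ * (d : G) * g⁻¹))
        (η (x⁻¹ * (d : G) * g⁻¹) * M) (by
      push_cast
      rw [hM]
      conv_lhs => rw [hσa']
      rw [show x⁻¹ * (d : G) * ((η (x⁻¹ * (d : G)) : G))⁻¹ * g⁻¹ =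
        (x⁻¹ * (d : G) * g⁻¹) * (g * ((η (x⁻¹ * (d : G)) : G))⁻¹ * g⁻¹) by group]
      conv_lhs => rw [hb0]
      group)
    have hη2 : ((η ((σ (x⁻¹ * (d : G)) : G) * g⁻¹)) : G) =
        ((η (x⁻¹ * (d : G) * g⁻¹)) : G) * (M : G) := by
      have := congrArg (fun z : H => (z : G)) claim2.2
      push_cast at this
      exact this.symm
    -- main rewrites
    rw [wPerm_apply, coordFormula H C σ η hdec huniq t πt hπt x v (e d)]
    rw [coordFormula H C σ η hdec huniq s πs hπs x (wPerm e w hw v) d]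
    rw [wPerm_apply]
    rw [he d]
    rw [← claim1.1, ← claim1.2, he (σ (x⁻¹ * (d : G))), ← claim2.1]
    simp only [hwdef]
    -- identify the three character values
    rw [show (⟨g⁻¹ * ((η ((d : G) * g⁻¹) : G))⁻¹ * g, hwmem d⟩ : H) = A⁻¹ from
      Subtype.ext (by push_cast; rw [hA]; group)]
    rw [show (⟨g⁻¹ * ((η (((σ (x⁻¹ * (d : G)) : C) : G) * g⁻¹) : G))⁻¹ * g,
        hwmem (σ (x⁻¹ * (d : G)))⟩ : H) = η (x⁻¹ * (d : G)) * B⁻¹ from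
      Subtype.ext (by push_cast; rw [hη2, hM, hB]; group)]
    rw [hts (η (x⁻¹ * (d : G) * g⁻¹) * (η ((d : G) * g⁻¹))⁻¹)]
    rw [show (⟨g⁻¹ * ((η (x⁻¹ * (d : G) * g⁻¹) * (η ((d : G) * g⁻¹))⁻¹ : H) : G) * g,
        hmem2 _ (η (x⁻¹ * (d : G) * g⁻¹) * (η ((d : G) * g⁻¹))⁻¹).2⟩ : H) = B * A⁻¹ from
      Subtype.ext (by push_cast; rw [hA, hB]; group)]
    -- finish with field arithmetic
    have hAne : ((s A : Circle) : ℂ) ≠ 0 := Circle.coe_ne_zero _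
    have hBne : ((s B : Circle) : ℂ) ≠ 0 := Circle.coe_ne_zero _
    have hQne : ((s (η (x⁻¹ * (d : G))) : Circle) : ℂ) ≠ 0 := Circle.coe_ne_zero _
    simp only [map_mul, map_inv, Circle.coe_mul, Circle.coe_inv]
    field_simp
end
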